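/- arXiv:2207.09311 — 5 statements merged into one kernel-verified Lean document; each statement's English description precedes it below -/
import Mathlib

section
/- Let X : Fin n × Fin n → ℝ be i.i.d. random variables with mean m₁ = E[X_{ij}] and second moment m₂ = E[X_{ij}²], on a probability space. Then the expected square of the determinant of the matrix A = (X_{ij}) equals n! · (m₂ + m₁²(n-1)) · (m₂ - m₁²)^{n-1}. -/
open MeasureTheory ProbabilityTheory Nat

lemma fortet_aux_integral_prod {Ω : Type*} [MeasureSpace Ω]
    [IsProbabilityMeasure (ℙ : Measure Ω)] {ι : Type*}
    (f : ι → Ω → ℝ) (hm : ∀ i, Measurable (f i))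
    (hind : iIndepFun f ℙ) (s : Finset ι)
    (hi : ∀ i ∈ s, Integrable (f i) ℙ) :
    Integrable (fun ω => ∏ i ∈ s, f i ω) ℙ ∧
      (∫ ω, ∏ i ∈ s, f i ω) = ∏ i ∈ s, ∫ ω, f i ω := by
  classical
  induction s using Finset.induction_on with
  | empty => simp
  | @insert a s ha ih =>
    obtain ⟨hps', hval⟩ := ih (fun i hi' => hi i (Finset.mem_insert_of_mem hi'))
    have hind2 : IndepFun (∏ j ∈ s, f j) (f a) ℙ :=
      iIndepFun.indepFun_finset_prod_of_notMem hind hm ha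
    have hfa : Integrable (f a) ℙ := hi a (Finset.mem_insert_self a s)
    have hps : Integrable (∏ j ∈ s, f j) ℙ := by
      have : (∏ j ∈ s, f j) = fun ω => ∏ i ∈ s, f i ω := by
        funext ω; simp
      rw [this]; exact hps'
    have hmul : Integrable ((∏ j ∈ s, f j) * f a) ℙ := hind2.integrable_mul hps hfa
    have hfe : (fun ω => ∏ i ∈ insert a s, f i ω) = (∏ j ∈ s, f j) * f a := by
      funext ω
      simp [Finset.prod_insert ha, Finset.prod_apply, mul_comm]
    constructor
    · rw [hfe]; exact hmul
    · rw [show (∫ ω, ∏ i ∈ insert a s, f i ω) = ∫ ω, ((∏ j ∈ s, f j) * f a) ω from by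
        rw [hfe]]
      rw [hind2.integral_mul_eq_mul_integral hps.aestronglyMeasurable hfa.aestronglyMeasurable]
      rw [Finset.prod_insert ha, mul_comm (∫ ω, f a ω)]
      congr 1
      rw [← hval]
      congr 1
      funext ω; simp


lemma fortet_term {Ω : Type*} [MeasureSpace Ω] [IsProbabilityMeasure (ℙ : Measure Ω)]
    (n : ℕ) (X : Fin n × Fin n → Ω → ℝ)
    (hmeas : ∀ p, Measurable (X p))
    (hindep : iIndepFun X ℙ)
    (m₁ m₂ : ℝ)
    (hint1 : ∀ p, Integrable (X p) ℙ)
    (hint2 : ∀ p, Integrable (fun ω => X p ω ^ 2) ℙ)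
    (hIm1 : ∀ p, (∫ ω, X p ω) = m₁)
    (hIm2 : ∀ p, (∫ ω, X p ω ^ 2) = m₂)
    (σ τ : Equiv.Perm (Fin n)) :
    Integrable (fun ω => ∏ i, X (σ i, i) ω * X (τ i, i) ω) ℙ ∧
      (∫ ω, ∏ i, X (σ i, i) ω * X (τ i, i) ω)
        = ∏ i, (if σ i = τ i then m₂ else m₁ ^ 2) := by
  classical
  set e : Fin n × Fin n → ℕ :=
    fun p => (if p.1 = σ p.2 then 1 else 0) + (if p.1 = τ p.2 then 1 else 0) with he
  set Y : Fin n × Fin n → Ω → ℝ := fun p ω => X p ω ^ e p with hY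
  have hYmeas : ∀ p, Measurable (Y p) := fun p => (hmeas p).pow_const _
  have hYind : iIndepFun Y ℙ :=
    hindep.comp (fun p (x : ℝ) => x ^ e p) (fun p => measurable_id.pow_const _)
  have hecase : ∀ p, e p = 0 ∨ e p = 1 ∨ e p = 2 := by
    intro p; simp only [he]; split_ifs <;> simp
  have hYint : ∀ p, Integrable (Y p) ℙ := by
    intro p
    rcases hecase p with h|h|h <;> simp only [hY, h, pow_zero, pow_one]
    · exact integrable_const 1
    · exact hint1 p
    · exact hint2 p
  have hpoint : ∀ ω, (∏ i, X (σ i, i) ω * X (τ i, i) ω) = ∏ p : Fin n × Fin n, Y p ω := by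
    intro ω
    rw [Fintype.prod_prod_type (fun p => Y p ω), Finset.prod_comm]
    refine (Finset.prod_congr rfl fun i _ => ?_).symm
    have hsplit : ∀ j : Fin n, Y (j, i) ω
        = (if j = σ i then X (j, i) ω else 1) * (if j = τ i then X (j, i) ω else 1) := by
      intro j
      simp only [hY, he, pow_add]
      congr 1 <;> split_ifs <;> simp
    simp only [hsplit]
    rw [Finset.prod_mul_distrib, Finset.prod_ite_eq' Finset.univ (σ i)
        (fun j => X (j, i) ω), Finset.prod_ite_eq' Finset.univ (τ i) (fun j => X (j, i) ω)]
    simp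
  obtain ⟨hI, hV⟩ := fortet_aux_integral_prod Y hYmeas hYind Finset.univ (fun p _ => hYint p)
  have hfun : (fun ω => ∏ i, X (σ i, i) ω * X (τ i, i) ω)
      = fun ω => ∏ p : Fin n × Fin n, Y p ω := funext hpoint
  refine ⟨hfun ▸ hI, ?_⟩
  have hYval : ∀ p : Fin n × Fin n, (∫ ω, Y p ω)
      = (if p.1 = σ p.2 then (if p.1 = τ p.2 then m₂ else m₁)
          else (if p.1 = τ p.2 then m₁ else 1)) := by
    intro p
    simp only [hY, he]
    split_ifs with h1 h2 h3
    · simpa using hIm2 p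
    · simpa using hIm1 p
    · simpa using hIm1 p
    · simp
  calc (∫ ω, ∏ i, X (σ i, i) ω * X (τ i, i) ω)
      = ∫ ω, ∏ p : Fin n × Fin n, Y p ω := by rw [hfun]
    _ = ∏ p : Fin n × Fin n, ∫ ω, Y p ω := hV
    _ = ∏ i, (if σ i = τ i then m₂ else m₁ ^ 2) := by
        rw [Finset.prod_congr rfl (fun p _ => hYval p),
          Fintype.prod_prod_type (fun p : Fin n × Fin n =>
            (if p.1 = σ p.2 then (if p.1 = τ p.2 then m₂ else m₁)
              else (if p.1 = τ p.2 then m₁ else 1))), Finset.prod_comm]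
        refine Finset.prod_congr rfl fun i _ => ?_
        by_cases h : σ i = τ i
        · have : ∀ j : Fin n, (if j = σ i then (if j = τ i then m₂ else m₁)
              else (if j = τ i then m₁ else 1)) = (if j = σ i then m₂ else 1) := by
            intro j; split_ifs with h1 h2 h3 <;> simp_all
          simp only [this]
          rw [Finset.prod_ite_eq' Finset.univ (σ i) (fun _ => m₂)]
          simp [h]
        · have : ∀ j : Fin n, (if j = σ i then (if j = τ i then m₂ else m₁)
              else (if j = τ i then m₁ else 1))
              = (if j = σ i then m₁ else 1) * (if j = τ i then m₁ else 1) := by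
            intro j; split_ifs with h1 h2 h3 <;> simp_all
          simp only [this]
          rw [Finset.prod_mul_distrib, Finset.prod_ite_eq' Finset.univ (σ i) (fun _ => m₁),
            Finset.prod_ite_eq' Finset.univ (τ i) (fun _ => m₁)]
          simp [h, sq]


lemma fortet_det_const_diag (n : ℕ) (hn : 1 ≤ n) (x y : ℝ) :
    (Matrix.of fun i j : Fin n => if i = j then x else y).det
      = (x + y * ((n : ℝ) - 1)) * (x - y) ^ (n - 1) := by
  rcases eq_or_ne x y with rfl | hxy
  · rcases Nat.lt_or_ge n 2 with h2 | h2
    · have hn1 : n = 1 := by omega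
      subst hn1
      simp [Matrix.det_fin_one]
    · have h01 : (⟨0, by omega⟩ : Fin n) ≠ ⟨1, by omega⟩ := by
        simp [Fin.ext_iff]
      rw [Matrix.det_zero_of_row_eq h01 (by funext j; simp [Matrix.of_apply, ite_self])]
      have : x - x = 0 := by ring
      rw [this, zero_pow (by omega : n - 1 ≠ 0), mul_zero]
  · have hne : x - y ≠ 0 := sub_ne_zero.mpr hxy
    have key : (Matrix.of fun i j : Fin n => if i = j then x else y)
        = (x - y) • (1 + Matrix.replicateCol (Fin 1) (fun _ => y / (x - y)) *
            Matrix.replicateRow (Fin 1) (fun _ => (1 : ℝ))) := by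
      ext i j
      simp only [Matrix.of_apply, Matrix.smul_apply, Matrix.add_apply, Matrix.one_apply,
        Matrix.mul_apply, Matrix.replicateCol_apply, Matrix.replicateRow_apply, Finset.sum_const,
        Finset.card_univ, Fintype.card_fin, one_smul, smul_eq_mul, mul_one]
      split_ifs <;> field_simp <;> ring
    rw [key, Matrix.det_smul]
    erw [Matrix.det_one_add_replicateCol_mul_replicateRow]
    simp only [dotProduct, Finset.sum_const, Finset.card_univ, Fintype.card_fin,
        nsmul_eq_mul, one_mul, smul_eq_mul]
    have hpow : (x - y) ^ n = (x - y) ^ (n - 1) * (x - y) := by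
      rw [← pow_succ, Nat.sub_add_cancel hn]
    rw [hpow]
    field_simp
    ring


/-- Fortet's formula: for an `n × n` random matrix with i.i.d. entries of mean
`m₁` and second moment `m₂`, `E[det A ²] = n! (m₂ + m₁²(n-1)) (m₂ - m₁²)^(n-1)`. -/
theorem expectation_det_sq_iid
    {Ω : Type*} [MeasureSpace Ω] [IsProbabilityMeasure (ℙ : Measure Ω)]
    (n : ℕ) (hn : 1 ≤ n) (X : Fin n × Fin n → Ω → ℝ)
    (hmeas : ∀ p, Measurable (X p))
    (hindep : iIndepFun X ℙ)
    (p₀ : Fin n × Fin n)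
    (hident : ∀ p, Measure.map (X p) ℙ = Measure.map (X p₀) ℙ)
    (hint : Integrable (fun ω => (X p₀ ω) ^ 2) ℙ)
    (m₁ m₂ : ℝ) (hm₁ : m₁ = ∫ ω, X p₀ ω) (hm₂ : m₂ = ∫ ω, (X p₀ ω) ^ 2) :
    (∫ ω, (Matrix.det (Matrix.of fun i j => X (i, j) ω)) ^ 2) =
      (n ! : ℝ) * (m₂ + m₁ ^ 2 * ((n : ℝ) - 1)) * (m₂ - m₁ ^ 2) ^ (n - 1) := by
  classical
  have hid : ∀ p, IdentDistrib (X p) (X p₀) ℙ ℙ := fun p =>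
    ⟨(hmeas p).aemeasurable, (hmeas p₀).aemeasurable, hident p⟩
  have hid2 : ∀ p, IdentDistrib (fun ω => X p ω ^ 2) (fun ω => X p₀ ω ^ 2) ℙ ℙ := fun p =>
    (hid p).comp (measurable_id.pow_const 2)
  have hint2 : ∀ p, Integrable (fun ω => X p ω ^ 2) ℙ := fun p =>
    ((hid2 p).integrable_iff).mpr hint
  have hint1 : ∀ p, Integrable (X p) ℙ := fun p =>
    ((memLp_two_iff_integrable_sq (hmeas p).aestronglyMeasurable).mpr
      (hint2 p)).integrable one_le_two
  have hIm1 : ∀ p, (∫ ω, X p ω) = m₁ := fun p => by rw [hm₁]; exact (hid p).integral_eq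
  have hIm2 : ∀ p, (∫ ω, X p ω ^ 2) = m₂ := fun p => by rw [hm₂]; exact (hid2 p).integral_eq
  have key := fortet_term n X hmeas hindep m₁ m₂ hint1 hint2 hIm1 hIm2
  have hdet : ∀ ω, (Matrix.det (Matrix.of fun i j => X (i, j) ω)) ^ 2
      = ∑ σ : Equiv.Perm (Fin n), ∑ τ : Equiv.Perm (Fin n),
          (((Equiv.Perm.sign σ : ℤ) : ℝ) * ((Equiv.Perm.sign τ : ℤ) : ℝ))
            * ∏ i, X (σ i, i) ω * X (τ i, i) ω := by
    intro ω
    rw [Matrix.det_apply', sq, Finset.sum_mul_sum]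
    refine Finset.sum_congr rfl fun σ _ => Finset.sum_congr rfl fun τ _ => ?_
    rw [Finset.prod_mul_distrib]
    simp only [Matrix.of_apply]
    ring
  simp only [hdet]
  rw [integral_finset_sum _ (fun σ _ =>
    integrable_finset_sum _ (fun τ _ => ((key σ τ).1.const_mul _)))]
  have h1 : ∀ σ : Equiv.Perm (Fin n),
      (∫ ω, ∑ τ : Equiv.Perm (Fin n),
        (((Equiv.Perm.sign σ : ℤ) : ℝ) * ((Equiv.Perm.sign τ : ℤ) : ℝ))
          * ∏ i, X (σ i, i) ω * X (τ i, i) ω)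
      = ∑ τ : Equiv.Perm (Fin n),
          (((Equiv.Perm.sign σ : ℤ) : ℝ) * ((Equiv.Perm.sign τ : ℤ) : ℝ))
            * ∏ i, (if σ i = τ i then m₂ else m₁ ^ 2) := by
    intro σ
    rw [integral_finset_sum _ (fun τ _ => (key σ τ).1.const_mul _)]
    refine Finset.sum_congr rfl fun τ _ => ?_
    rw [integral_const_mul, (key σ τ).2]
  simp only [h1]
  have h2 : ∀ σ : Equiv.Perm (Fin n),
      (∑ τ : Equiv.Perm (Fin n),
        (((Equiv.Perm.sign σ : ℤ) : ℝ) * ((Equiv.Perm.sign τ : ℤ) : ℝ))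
          * ∏ i, (if σ i = τ i then m₂ else m₁ ^ 2))
      = ∑ π : Equiv.Perm (Fin n), ((Equiv.Perm.sign π : ℤ) : ℝ)
          * ∏ i, (if π i = i then m₂ else m₁ ^ 2) := by
    intro σ
    rw [← Equiv.sum_comp (Equiv.mulLeft σ)
      (fun τ => (((Equiv.Perm.sign σ : ℤ) : ℝ) * ((Equiv.Perm.sign τ : ℤ) : ℝ))
        * ∏ i, (if σ i = τ i then m₂ else m₁ ^ 2))]
    refine Finset.sum_congr rfl fun π _ => ?_
    have hL : (Equiv.mulLeft σ) π = σ * π := rfl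
    rw [hL]
    have hsign : ((Equiv.Perm.sign σ : ℤ) : ℝ) * ((Equiv.Perm.sign (σ * π) : ℤ) : ℝ)
        = ((Equiv.Perm.sign π : ℤ) : ℝ) := by
      rw [Equiv.Perm.sign_mul]
      rcases Int.units_eq_one_or (Equiv.Perm.sign σ) with h | h <;> rw [h] <;>
        push_cast <;> ring
    rw [hsign]
    congr 1
    refine Finset.prod_congr rfl fun i _ => ?_
    have hcond : (σ i = (σ * π) i) ↔ (π i = i) := by
      rw [Equiv.Perm.mul_apply]
      constructor
      · intro h; exact (σ.injective h).symm
      · intro h; rw [h]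
    simp only [hcond]
  simp only [h2]
  rw [Finset.sum_const, Finset.card_univ, Fintype.card_perm, Fintype.card_fin,
    nsmul_eq_mul]
  have h3 : (∑ π : Equiv.Perm (Fin n), ((Equiv.Perm.sign π : ℤ) : ℝ)
        * ∏ i, (if π i = i then m₂ else m₁ ^ 2))
      = (m₂ + m₁ ^ 2 * ((n : ℝ) - 1)) * (m₂ - m₁ ^ 2) ^ (n - 1) := by
    rw [← fortet_det_const_diag n hn m₂ (m₁ ^ 2), Matrix.det_apply']
    refine Finset.sum_congr rfl fun π _ => ?_
    simp only [Matrix.of_apply]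
  rw [h3, mul_assoc]
end

section
/- Let X_{ij}, 1 ≤ i,j ≤ n, be i.i.d. centered random variables (E[X_{ij}] = 0) with finite third moment μ₃ = E[X_{ij}³], and let B = (X_{ij}). Let S = ∑_{i,j} (-1)^{i+j} det(B_{ij}), where B_{ij} is B with row i and column j deleted. Then E[det(B)³ · S] = n² · μ₃ · E[det(B')⁴], where B' is an (n-1)×(n-1) matrix with i.i.d. entries of the same distribution. -/
open MeasureTheory ProbabilityTheory Nat Finset Equiv

set_option linter.unusedSectionVars false

namespace DetCof

variable {Ω : Type*} [MeasureSpace Ω] [IsProbabilityMeasure (ℙ : Measure Ω)]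
  (X : ℕ × ℕ → Ω → ℝ)

/-- k-th moment of the common distribution. -/
noncomputable def momX (k : ℕ) : ℝ := ∫ ω, X (0, 0) ω ^ k

lemma momX_zero : momX X 0 = 1 := by simp [momX]

lemma abs_pow_le (x : ℝ) {k : ℕ} (hk : k ≤ 4) : ‖x ^ k‖ ≤ 1 + x ^ 4 := by
  have hx4 : (0:ℝ) ≤ x ^ 4 := by positivity
  rw [norm_pow, Real.norm_eq_abs]
  rcases le_total |x| 1 with h | h
  · have : |x| ^ k ≤ 1 := pow_le_one₀ (abs_nonneg x) h
    linarith
  · have h1 : |x| ^ k ≤ |x| ^ 4 := pow_le_pow_right₀ h hk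
    have h2 : |x| ^ 4 = x ^ 4 := by
      rw [← abs_pow, abs_of_nonneg hx4]
    linarith

lemma int_pow (hmeas : ∀ p, Measurable (X p))
    (hident : ∀ p, Measure.map (X p) ℙ = Measure.map (X (0, 0)) ℙ)
    (hmom4 : Integrable (fun ω => (X (0, 0) ω) ^ 4) ℙ)
    (p : ℕ × ℕ) {k : ℕ} (hk : k ≤ 4) :
    Integrable (fun ω => X p ω ^ k) ℙ := by
  have hm4 : Integrable (fun x : ℝ => x ^ 4) (Measure.map (X (0,0)) ℙ) :=
    (integrable_map_measure (g := fun x : ℝ => x ^ 4)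
      (measurable_id.pow_const 4).aestronglyMeasurable (hmeas (0,0)).aemeasurable).mpr hmom4
  have h4 : Integrable (fun ω => X p ω ^ 4) ℙ :=
    (integrable_map_measure (g := fun x : ℝ => x ^ 4)
      (measurable_id.pow_const 4).aestronglyMeasurable (hmeas p).aemeasurable).mp
      (hident p ▸ hm4)
  refine Integrable.mono' ((integrable_const (1:ℝ)).add h4)
    ((hmeas p).pow_const k).aestronglyMeasurable ?_
  filter_upwards with ω
  exact abs_pow_le _ hk

lemma int_momX (hmeas : ∀ p, Measurable (X p))
    (hident : ∀ p, Measure.map (X p) ℙ = Measure.map (X (0, 0)) ℙ)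
    (p : ℕ × ℕ) (k : ℕ) :
    (∫ ω, X p ω ^ k) = momX X k := by
  have h1 : (∫ ω, X p ω ^ k) = ∫ x, x ^ k ∂(Measure.map (X p) ℙ) :=
    (integral_map (hmeas p).aemeasurable
      (measurable_id.pow_const k).aestronglyMeasurable).symm
  have h2 : momX X k = ∫ x, x ^ k ∂(Measure.map (X (0,0)) ℙ) :=
    (integral_map (hmeas (0,0)).aemeasurable
      (measurable_id.pow_const k).aestronglyMeasurable).symm
  rw [h1, hident p, ← h2]



variable {Ω : Type*} [MeasureSpace Ω] [IsProbabilityMeasure (ℙ : Measure Ω)]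
  (X : ℕ × ℕ → Ω → ℝ)



lemma mono_int (hmeas : ∀ p, Measurable (X p))
    (hindep : iIndepFun X ℙ)
    (hident : ∀ p, Measure.map (X p) ℙ = Measure.map (X (0, 0)) ℙ)
    (hmom4 : Integrable (fun ω => (X (0, 0) ω) ^ 4) ℙ)
    (s : Finset (ℕ × ℕ)) (a : ℕ × ℕ → ℕ) (ha : ∀ p, a p ≤ 4) :
    Integrable (fun ω => ∏ p ∈ s, X p ω ^ a p) ℙ ∧
      (∫ ω, ∏ p ∈ s, X p ω ^ a p) = ∏ p ∈ s, momX X (a p) := by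
  classical
  induction s using Finset.induction_on with
  | empty => simp
  | @insert p s hp ih =>
    have hYmeas : ∀ q, Measurable fun ω => X q ω ^ a q := fun q => (hmeas q).pow_const _
    have hY : iIndepFun (fun q (ω : Ω) => X q ω ^ a q) ℙ :=
      hindep.comp (fun q (x : ℝ) => x ^ a q) (fun q => measurable_id.pow_const (a q))
    have hIF : IndepFun (fun ω => X p ω ^ a p) (fun ω => ∏ q ∈ s, X q ω ^ a q) ℙ := by
      have h := (hY.indepFun_finsetProd_of_notMem hYmeas hp).symm
      have hfun : (∏ q ∈ s, fun ω : Ω => X q ω ^ a q) = fun ω => ∏ q ∈ s, X q ω ^ a q := by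
        funext ω; exact Finset.prod_apply ω s _
      rwa [hfun] at h
    have hint1 : Integrable (fun ω => X p ω ^ a p) ℙ :=
      int_pow X hmeas hident hmom4 p (ha p)
    have hmul : Integrable (fun ω => X p ω ^ a p * ∏ q ∈ s, X q ω ^ a q) ℙ :=
      hIF.integrable_mul hint1 ih.1
    have hintegral : (∫ ω, X p ω ^ a p * ∏ q ∈ s, X q ω ^ a q)
        = (∫ ω, X p ω ^ a p) * ∫ ω, ∏ q ∈ s, X q ω ^ a q := by
      have := hIF.integral_mul_eq_mul_integral hint1.aestronglyMeasurable ih.1.aestronglyMeasurable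
      exact this
    constructor
    · simpa only [Finset.prod_insert hp] using hmul
    · rw [show (fun ω => ∏ q ∈ insert p s, X q ω ^ a q)
          = fun ω => X p ω ^ a p * ∏ q ∈ s, X q ω ^ a q by
        funext ω; exact Finset.prod_insert hp]
      rw [Finset.prod_insert hp, hintegral, ih.2, int_momX X hmeas hident p (a p)]



variable {Ω : Type*} [MeasureSpace Ω] [IsProbabilityMeasure (ℙ : Measure Ω)]
  (X : ℕ × ℕ → Ω → ℝ)

/-- integral of the monomial given by a multiset of positions. -/
noncomputable def momProd (c : Multiset (ℕ × ℕ)) : ℝ :=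
  ∏ p ∈ c.toFinset, momX X (c.count p)

lemma mult_int (hmeas : ∀ p, Measurable (X p))
    (hindep : iIndepFun X ℙ)
    (hident : ∀ p, Measure.map (X p) ℙ = Measure.map (X (0, 0)) ℙ)
    (hmom4 : Integrable (fun ω => (X (0, 0) ω) ^ 4) ℙ)
    (c : Multiset (ℕ × ℕ)) (hc : ∀ p, c.count p ≤ 4) :
    Integrable (fun ω => (c.map (fun p => X p ω)).prod) ℙ ∧
      (∫ ω, (c.map (fun p => X p ω)).prod) = momProd X c := by
  classical
  have hpt : ∀ ω, (c.map (fun p => X p ω)).prod = ∏ p ∈ c.toFinset, X p ω ^ c.count p :=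
    fun ω => Finset.prod_multiset_map_count c _
  have h := mono_int X hmeas hindep hident hmom4 c.toFinset c.count hc
  constructor
  · simpa only [← hpt] using h.1
  · rw [show (fun ω => (c.map (fun p => X p ω)).prod)
        = fun ω => ∏ p ∈ c.toFinset, X p ω ^ c.count p from funext hpt]
    exact h.2

/-- Summation helper: a rv written as a finite signed sum of token monomials. -/
lemma sum_int {ι : Type*} (hmeas : ∀ p, Measurable (X p))
    (hindep : iIndepFun X ℙ)
    (hident : ∀ p, Measure.map (X p) ℙ = Measure.map (X (0, 0)) ℙ)
    (hmom4 : Integrable (fun ω => (X (0, 0) ω) ^ 4) ℙ)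
    (T : Finset ι) (co : ι → ℝ) (ms : ι → Multiset (ℕ × ℕ))
    (hcnt : ∀ t ∈ T, ∀ p, (ms t).count p ≤ 4)
    (F : Ω → ℝ)
    (hF : ∀ ω, F ω = ∑ t ∈ T, co t * ((ms t).map (fun p => X p ω)).prod) :
    Integrable F ℙ ∧ (∫ ω, F ω) = ∑ t ∈ T, co t * momProd X (ms t) := by
  classical
  have hterm : ∀ t ∈ T, Integrable (fun ω => co t * ((ms t).map (fun p => X p ω)).prod) ℙ :=
    fun t ht => ((mult_int X hmeas hindep hident hmom4 (ms t) (hcnt t ht)).1).const_mul _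
  have hFeq : F = fun ω => ∑ t ∈ T, co t * ((ms t).map (fun p => X p ω)).prod := funext hF
  constructor
  · rw [hFeq]; exact integrable_finset_sum T hterm
  · rw [hFeq, integral_finset_sum T hterm]
    refine Finset.sum_congr rfl fun t ht => ?_
    rw [integral_const_mul, (mult_int X hmeas hindep hident hmom4 (ms t) (hcnt t ht)).2]

lemma momX_one (hcent : (∫ ω, X (0, 0) ω) = 0) : momX X 1 = 0 := by
  simp only [momX, pow_one]; exact hcent

/-- vanishing: a token of multiplicity one kills the moment product. -/
lemma momProd_eq_zero (hcent : (∫ ω, X (0, 0) ω) = 0)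
    {c : Multiset (ℕ × ℕ)} {p : ℕ × ℕ} (hp : c.count p = 1) :
    momProd X c = 0 := by
  classical
  have hmem : p ∈ c.toFinset := Multiset.mem_toFinset.2 (Multiset.count_pos.1 (hp ▸ one_pos))
  exact Finset.prod_eq_zero hmem (by rw [hp, momX_one X hcent])

/-- splitting off a block of repeated tokens. -/
lemma momProd_replicate_add (k : ℕ) (hk : k ≠ 0) (p : ℕ × ℕ) (c : Multiset (ℕ × ℕ))
    (hp : c.count p = 0) :
    momProd X (Multiset.replicate k p + c) = momX X k * momProd X c := by
  classical
  have hpc : p ∉ c.toFinset := by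
    simp [Multiset.mem_toFinset, ← Multiset.count_pos, hp]
  have htf : (Multiset.replicate k p + c).toFinset = insert p c.toFinset := by
    rw [Multiset.toFinset_add, Multiset.toFinset_replicate, if_neg hk]
    exact (Finset.insert_eq p c.toFinset).symm
  rw [momProd, htf, Finset.prod_insert hpc, Multiset.count_add, Multiset.count_replicate,
    if_pos rfl, hp, Nat.add_zero]
  congr 1
  refine Finset.prod_congr rfl fun q hq => ?_
  have hqp : q ≠ p := fun h => hpc (h ▸ hq)
  rw [Multiset.count_add, Multiset.count_replicate, if_neg (Ne.symm hqp), Nat.zero_add]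

/-- moment product of an injectively relabeled multiset. -/
lemma momProd_map {γ : Type*} [DecidableEq γ] (s : Multiset γ) {u : γ → ℕ × ℕ}
    (hu : Function.Injective u) :
    momProd X (s.map u) = ∏ q ∈ s.toFinset, momX X (s.count q) := by
  classical
  rw [momProd, Multiset.toFinset_map, Finset.prod_image (fun a _ b _ h => hu h)]
  refine Finset.prod_congr rfl fun q hq => ?_
  rw [Multiset.count_map_eq_count' u s hu]


/-! ### Tokens -/

def sg {m : ℕ} (τ : Equiv.Perm (Fin m)) : ℝ := ((Equiv.Perm.sign τ : ℤ) : ℝ)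

def gB {m : ℕ} (σ : Equiv.Perm (Fin m)) (r : Fin m) : ℕ × ℕ := ((σ r : ℕ), (r : ℕ))

def gM {m : ℕ} (i j : Fin (m + 1)) (τ : Equiv.Perm (Fin m)) (r : Fin m) : ℕ × ℕ :=
  ((i.succAbove (τ r) : ℕ), (j.succAbove r : ℕ))

def tokB {m : ℕ} (σ : Equiv.Perm (Fin m)) : Multiset (ℕ × ℕ) :=
  Finset.univ.val.map (gB σ)

def tokM {m : ℕ} (i j : Fin (m + 1)) (τ : Equiv.Perm (Fin m)) : Multiset (ℕ × ℕ) :=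
  Finset.univ.val.map (gM i j τ)

lemma gB_inj {m : ℕ} (σ : Equiv.Perm (Fin m)) : Function.Injective (gB σ) := by
  intro a b h
  exact Fin.val_injective (congrArg Prod.snd h)

lemma gM_inj {m : ℕ} (i j : Fin (m + 1)) (τ : Equiv.Perm (Fin m)) :
    Function.Injective (gM i j τ) := by
  intro a b h
  exact Fin.succAbove_right_injective (Fin.val_injective (congrArg Prod.snd h))

lemma count_map_univ_le_one {α : Type*} [Fintype α] [DecidableEq α] {g : α → ℕ × ℕ}
    (hg : Function.Injective g) (p : ℕ × ℕ) :
    (Finset.univ.val.map g).count p ≤ 1 :=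
  Multiset.nodup_iff_count_le_one.1 (Finset.univ.nodup.map hg) p

lemma count_map_univ_self {α : Type*} [Fintype α] [DecidableEq α] {g : α → ℕ × ℕ}
    (hg : Function.Injective g) (r : α) :
    (Finset.univ.val.map g).count (g r) = 1 := by
  rw [Multiset.count_map_eq_count' g _ hg]
  exact Multiset.count_eq_one_of_mem Finset.univ.nodup (Finset.mem_univ r)

lemma count_map_univ_zero {α : Type*} [Fintype α] [DecidableEq α] {g : α → ℕ × ℕ}
    {p : ℕ × ℕ} (h : ∀ r, g r ≠ p) :
    (Finset.univ.val.map g).count p = 0 := by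
  rw [Multiset.count_eq_zero]
  intro hmem
  obtain ⟨r, _, hr⟩ := Multiset.mem_map.1 hmem
  exact h r hr

lemma tokM_count_le_one {m : ℕ} (i j : Fin (m + 1)) (τ : Equiv.Perm (Fin m)) (p : ℕ × ℕ) :
    (tokM i j τ).count p ≤ 1 := count_map_univ_le_one (gM_inj i j τ) p

lemma tokM_count_row {m : ℕ} {i : Fin (m + 1)} (j : Fin (m + 1)) (τ : Equiv.Perm (Fin m))
    {p : ℕ × ℕ} (h : p.1 = (i : ℕ)) : (tokM i j τ).count p = 0 := by
  refine count_map_univ_zero fun r hr => ?_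
  have : ((i.succAbove (τ r) : ℕ)) = (i : ℕ) := by rw [← h, ← hr]; rfl
  exact Fin.succAbove_ne i (τ r) (Fin.val_injective this)

lemma tokM_count_col {m : ℕ} (i : Fin (m + 1)) {j : Fin (m + 1)} (τ : Equiv.Perm (Fin m))
    {p : ℕ × ℕ} (h : p.2 = (j : ℕ)) : (tokM i j τ).count p = 0 := by
  refine count_map_univ_zero fun r hr => ?_
  have : ((j.succAbove r : ℕ)) = (j : ℕ) := by rw [← h, ← hr]; rfl
  exact Fin.succAbove_ne j r (Fin.val_injective this)

/-! ### Determinant expansions -/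

lemma prod_map_tok {α : Type*} [Fintype α] (g : α → ℕ × ℕ) (f : ℕ × ℕ → ℝ) :
    ((Finset.univ.val.map g).map f).prod = ∏ r, f (g r) := by
  rw [Multiset.map_map, ← Finset.prod_eq_multiset_prod]
  rfl

lemma detB'_expand {m : ℕ} (f : ℕ × ℕ → ℝ) :
    Matrix.det (Matrix.of fun i j : Fin m => f ((i : ℕ), (j : ℕ)))
      = ∑ σ : Equiv.Perm (Fin m), sg σ * ((tokB σ).map f).prod := by
  rw [Matrix.det_apply']
  refine Finset.sum_congr rfl fun σ _ => ?_
  rw [tokB, prod_map_tok]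
  rfl

lemma minor_expand {m : ℕ} (i j : Fin (m + 1)) (f : ℕ × ℕ → ℝ) :
    Matrix.det ((Matrix.of fun i' j' : Fin (m + 1) =>
        f ((i' : ℕ), (j' : ℕ))).submatrix i.succAbove j.succAbove)
      = ∑ τ : Equiv.Perm (Fin m), sg τ * ((tokM i j τ).map f).prod := by
  rw [Matrix.det_apply']
  refine Finset.sum_congr rfl fun τ _ => ?_
  rw [tokM, prod_map_tok]
  rfl


noncomputable def mdet {Ω : Type*} [MeasureSpace Ω] (X : ℕ × ℕ → Ω → ℝ) {m : ℕ}
    (i k : Fin (m + 1)) (ω : Ω) : ℝ :=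
  Matrix.det ((Matrix.of fun i' j' : Fin (m + 1) =>
    X ((i' : ℕ), (j' : ℕ)) ω).submatrix i.succAbove k.succAbove)

def gF {m : ℕ} (τ : Equiv.Perm (Fin m)) (r : Fin m) : Fin m × Fin m := (τ r, r)

lemma sum_mul4 {α : Type*} [Fintype α] (x : ℝ) (f1 f2 f3 f4 : α → ℝ) :
    x * ((∑ a, f1 a) * (∑ a, f2 a) * (∑ a, f3 a) * (∑ a, f4 a)) =
    ∑ t : α × α × α × α, x * (f1 t.2.2.2 * f2 t.2.2.1 * f3 t.2.1 * f4 t.1) := by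
  simp only [Fintype.sum_prod_type, Finset.mul_sum, Finset.sum_mul]

lemma u1_inj {m : ℕ} (i j : Fin (m + 1)) :
    Function.Injective (fun q : Fin m × Fin m =>
      ((i.succAbove q.1 : ℕ), (j.succAbove q.2 : ℕ))) := by
  intro a b h
  have h1 : ((i.succAbove a.1 : ℕ)) = ((i.succAbove b.1 : ℕ)) := congrArg Prod.fst h
  have h2 : ((j.succAbove a.2 : ℕ)) = ((j.succAbove b.2 : ℕ)) := congrArg Prod.snd h
  exact Prod.ext (Fin.succAbove_right_injective (Fin.val_injective h1))
    (Fin.succAbove_right_injective (Fin.val_injective h2))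

lemma u2_inj {m : ℕ} : Function.Injective (fun q : Fin m × Fin m => ((q.1 : ℕ), (q.2 : ℕ))) := by
  intro a b h
  exact Prod.ext (Fin.val_injective (congrArg Prod.fst h))
    (Fin.val_injective (congrArg Prod.snd h))

lemma tokM_eq_map {m : ℕ} (i j : Fin (m + 1)) (τ : Equiv.Perm (Fin m)) :
    tokM i j τ = (Finset.univ.val.map (gF τ)).map
      (fun q : Fin m × Fin m => ((i.succAbove q.1 : ℕ), (j.succAbove q.2 : ℕ))) := by
  rw [Multiset.map_map]; rfl

lemma tokB_eq_map {m : ℕ} (τ : Equiv.Perm (Fin m)) :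
    tokB τ = (Finset.univ.val.map (gF τ)).map
      (fun q : Fin m × Fin m => ((q.1 : ℕ), (q.2 : ℕ))) := by
  rw [Multiset.map_map]; rfl

variable {Ω : Type*} [MeasureSpace Ω] [IsProbabilityMeasure (ℙ : Measure Ω)] in
lemma key (X : ℕ × ℕ → Ω → ℝ)
    (hmeas : ∀ p, Measurable (X p))
    (hindep : iIndepFun X ℙ)
    (hident : ∀ p, Measure.map (X p) ℙ = Measure.map (X (0, 0)) ℙ)
    (hcent : (∫ ω, X (0, 0) ω) = 0)
    (hmom4 : Integrable (fun ω => (X (0, 0) ω) ^ 4) ℙ)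
    {m : ℕ} (i j k1 k2 k3 : Fin (m + 1)) :
    Integrable (fun ω => X ((i : ℕ), (k1 : ℕ)) ω * X ((i : ℕ), (k2 : ℕ)) ω *
      X ((i : ℕ), (k3 : ℕ)) ω *
      (mdet X i k1 ω * mdet X i k2 ω * mdet X i k3 ω * mdet X i j ω)) ℙ ∧
    (∫ ω, X ((i : ℕ), (k1 : ℕ)) ω * X ((i : ℕ), (k2 : ℕ)) ω * X ((i : ℕ), (k3 : ℕ)) ω *
      (mdet X i k1 ω * mdet X i k2 ω * mdet X i k3 ω * mdet X i j ω)) =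
    (if k1 = j ∧ k2 = j ∧ k3 = j then
      momX X 3 * ∫ ω, (Matrix.det (Matrix.of fun a b : Fin m => X ((a : ℕ), (b : ℕ)) ω)) ^ 4
     else 0) := by
  classical
  set T4 : Finset (Equiv.Perm (Fin m) × Equiv.Perm (Fin m) × Equiv.Perm (Fin m)
      × Equiv.Perm (Fin m)) := Finset.univ with hT4
  set co : Equiv.Perm (Fin m) × Equiv.Perm (Fin m) × Equiv.Perm (Fin m) × Equiv.Perm (Fin m)
      → ℝ := fun t => sg t.2.2.2 * sg t.2.2.1 * sg t.2.1 * sg t.1 with hco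
  set ms : Equiv.Perm (Fin m) × Equiv.Perm (Fin m) × Equiv.Perm (Fin m) × Equiv.Perm (Fin m)
      → Multiset (ℕ × ℕ) := fun t =>
      ((i : ℕ), (k1 : ℕ)) ::ₘ ((i : ℕ), (k2 : ℕ)) ::ₘ ((i : ℕ), (k3 : ℕ)) ::ₘ
        (tokM i k1 t.2.2.2 + tokM i k2 t.2.2.1 + tokM i k3 t.2.1 + tokM i j t.1) with hms
  have hcnt : ∀ t ∈ T4, ∀ p, (ms t).count p ≤ 4 := by
    intro t _ p
    have e1 := tokM_count_le_one i k1 t.2.2.2 p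
    have e2 := tokM_count_le_one i k2 t.2.2.1 p
    have e3 := tokM_count_le_one i k3 t.2.1 p
    have e4 := tokM_count_le_one i j t.1 p
    simp only [hms, Multiset.count_cons, Multiset.count_add]
    rcases eq_or_ne p.1 (i : ℕ) with hp | hp
    · rw [tokM_count_row _ _ hp, tokM_count_row _ _ hp, tokM_count_row _ _ hp,
        tokM_count_row _ _ hp]
      split_ifs <;> norm_num
    · have n1 : p ≠ ((i : ℕ), (k1 : ℕ)) := fun h => hp (by rw [h])
      have n2 : p ≠ ((i : ℕ), (k2 : ℕ)) := fun h => hp (by rw [h])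
      have n3 : p ≠ ((i : ℕ), (k3 : ℕ)) := fun h => hp (by rw [h])
      rw [if_neg n1, if_neg n2, if_neg n3]
      omega
  have hF : ∀ ω, (X ((i : ℕ), (k1 : ℕ)) ω * X ((i : ℕ), (k2 : ℕ)) ω * X ((i : ℕ), (k3 : ℕ)) ω *
      (mdet X i k1 ω * mdet X i k2 ω * mdet X i k3 ω * mdet X i j ω)) =
      ∑ t ∈ T4, co t * ((ms t).map (fun p => X p ω)).prod := by
    intro ω
    have E : ∀ k : Fin (m + 1), mdet X i k ω
        = ∑ τ : Equiv.Perm (Fin m), sg τ * ((tokM i k τ).map (fun p => X p ω)).prod :=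
      fun k => minor_expand i k (fun p => X p ω)
    rw [E k1, E k2, E k3, E j, sum_mul4, hT4]
    refine Finset.sum_congr rfl fun t _ => ?_
    simp only [hms, hco, Multiset.map_cons, Multiset.prod_cons, Multiset.map_add,
      Multiset.prod_add]
    ring
  obtain ⟨hInt, hVal⟩ := sum_int X hmeas hindep hident hmom4 T4 co ms hcnt _ hF
  refine ⟨hInt, ?_⟩
  rw [hVal]
  by_cases hk : k1 = j ∧ k2 = j ∧ k3 = j
  · obtain ⟨e1, e2, e3⟩ := hk
    rw [if_pos ⟨e1, e2, e3⟩]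
    set ms' : Equiv.Perm (Fin m) × Equiv.Perm (Fin m) × Equiv.Perm (Fin m) × Equiv.Perm (Fin m)
        → Multiset (ℕ × ℕ) := fun t =>
        tokB t.2.2.2 + tokB t.2.2.1 + tokB t.2.1 + tokB t.1 with hms'
    have hcnt' : ∀ t ∈ T4, ∀ p, (ms' t).count p ≤ 4 := by
      intro t _ p
      have e1 := count_map_univ_le_one (gB_inj t.2.2.2) p
      have e2 := count_map_univ_le_one (gB_inj t.2.2.1) p
      have e3 := count_map_univ_le_one (gB_inj t.2.1) p
      have e4 := count_map_univ_le_one (gB_inj t.1) p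
      simp only [hms', tokB, Multiset.count_add]
      omega
    have hF' : ∀ ω, ((Matrix.det (Matrix.of fun a b : Fin m => X ((a : ℕ), (b : ℕ)) ω)) ^ 4) =
        ∑ t ∈ T4, co t * ((ms' t).map (fun p => X p ω)).prod := by
      intro ω
      have E := detB'_expand (m := m) (fun p => X p ω)
      have h4 : ∀ x : ℝ, x ^ 4 = 1 * (x * x * x * x) := fun x => by ring
      rw [h4, E, sum_mul4, hT4]
      refine Finset.sum_congr rfl fun t _ => ?_
      simp only [hms', hco, Multiset.map_add, Multiset.prod_add]
      ring
    obtain ⟨-, hVal'⟩ := sum_int X hmeas hindep hident hmom4 T4 co ms' hcnt' _ hF'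
    rw [hVal', Finset.mul_sum]
    refine Finset.sum_congr rfl fun t _ => ?_
    have hrest0 : (tokM i j t.2.2.2 + tokM i j t.2.2.1 + tokM i j t.2.1
        + tokM i j t.1).count ((i : ℕ), (j : ℕ)) = 0 := by
      have z : ∀ τ : Equiv.Perm (Fin m), (tokM i j τ).count ((i : ℕ), (j : ℕ)) = 0 :=
        fun τ => tokM_count_row (i := i) j τ (p := ((i : ℕ), (j : ℕ))) rfl
      simp only [Multiset.count_add, z]
    have hmst : ms t = Multiset.replicate 3 ((i : ℕ), (j : ℕ)) +
        (tokM i j t.2.2.2 + tokM i j t.2.2.1 + tokM i j t.2.1 + tokM i j t.1) := by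
      rw [hms]
      simp only [e1, e2, e3]
      simp [Multiset.replicate_succ, Multiset.cons_add]
    rw [hmst, momProd_replicate_add X 3 (by norm_num) _ _ hrest0]
    have hmap1 : tokM i j t.2.2.2 + tokM i j t.2.2.1 + tokM i j t.2.1 + tokM i j t.1
        = (Finset.univ.val.map (gF t.2.2.2) + Finset.univ.val.map (gF t.2.2.1)
            + Finset.univ.val.map (gF t.2.1) + Finset.univ.val.map (gF t.1)).map
          (fun q : Fin m × Fin m => ((i.succAbove q.1 : ℕ), (j.succAbove q.2 : ℕ))) := by
      simp only [Multiset.map_add, ← tokM_eq_map]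
    have hmap2 : ms' t
        = (Finset.univ.val.map (gF t.2.2.2) + Finset.univ.val.map (gF t.2.2.1)
            + Finset.univ.val.map (gF t.2.1) + Finset.univ.val.map (gF t.1)).map
          (fun q : Fin m × Fin m => ((q.1 : ℕ), (q.2 : ℕ))) := by
      simp only [hms', Multiset.map_add, ← tokB_eq_map]
    rw [hmap1, momProd_map X _ (u1_inj i j), ← momProd_map X _ (u2_inj (m := m)), ← hmap2]
    ring
  · rw [if_neg hk]
    refine Finset.sum_eq_zero fun t _ => ?_
    suffices h : momProd X (ms t) = 0 by rw [h, mul_zero]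
    by_cases h12 : k1 = k2
    · by_cases h13 : k1 = k3
      · have hkj : k1 ≠ j := fun h => hk ⟨h, h12 ▸ h, h13 ▸ h⟩
        obtain ⟨r₀, hr₀⟩ := Fin.exists_succAbove_eq hkj
        refine momProd_eq_zero X hcent (p := gM i j t.1 r₀) ?_
        have hcol : (gM i j t.1 r₀).2 = (k1 : ℕ) := by simp [gM, hr₀]
        have hrow : (gM i j t.1 r₀).1 ≠ (i : ℕ) := fun h =>
          Fin.succAbove_ne i _ (Fin.val_injective h)
        have c1 : (tokM i k1 t.2.2.2).count _ = 0 := tokM_count_col i t.2.2.2 hcol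
        have c2 : (tokM i k2 t.2.2.1).count _ = 0 := tokM_count_col i t.2.2.1 (h12 ▸ hcol)
        have c3 : (tokM i k3 t.2.1).count _ = 0 := tokM_count_col i t.2.1 (h13 ▸ hcol)
        have c4 : (tokM i j t.1).count (gM i j t.1 r₀) = 1 :=
          count_map_univ_self (gM_inj i j t.1) r₀
        have n1 : gM i j t.1 r₀ ≠ ((i : ℕ), (k1 : ℕ)) := fun h => hrow (by rw [h])
        have n2 : gM i j t.1 r₀ ≠ ((i : ℕ), (k2 : ℕ)) := fun h => hrow (by rw [h])
        have n3 : gM i j t.1 r₀ ≠ ((i : ℕ), (k3 : ℕ)) := fun h => hrow (by rw [h])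
        simp [hms, Multiset.count_cons, Multiset.count_add, if_neg n1, if_neg n2,
          if_neg n3, c1, c2, c3, c4]
      · refine momProd_eq_zero X hcent (p := ((i : ℕ), (k3 : ℕ))) ?_
        have c1 : (tokM i k1 t.2.2.2).count ((i : ℕ), (k3 : ℕ)) = 0 := tokM_count_row _ _ rfl
        have c2 : (tokM i k2 t.2.2.1).count ((i : ℕ), (k3 : ℕ)) = 0 := tokM_count_row _ _ rfl
        have c3 : (tokM i k3 t.2.1).count ((i : ℕ), (k3 : ℕ)) = 0 := tokM_count_row _ _ rfl
        have c4 : (tokM i j t.1).count ((i : ℕ), (k3 : ℕ)) = 0 := tokM_count_row _ _ rfl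
        have w1 : ¬(k3 = k1) := fun h => h13 h.symm
        have w2 : ¬(k3 = k2) := fun h => h13 (h12.trans h.symm)
        simp [hms, Multiset.count_cons, Multiset.count_add, Fin.val_inj, w1, w2,
          c1, c2, c3, c4]
    · by_cases h13 : k1 = k3
      · refine momProd_eq_zero X hcent (p := ((i : ℕ), (k2 : ℕ))) ?_
        have c1 : (tokM i k1 t.2.2.2).count ((i : ℕ), (k2 : ℕ)) = 0 := tokM_count_row _ _ rfl
        have c2 : (tokM i k2 t.2.2.1).count ((i : ℕ), (k2 : ℕ)) = 0 := tokM_count_row _ _ rfl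
        have c3 : (tokM i k3 t.2.1).count ((i : ℕ), (k2 : ℕ)) = 0 := tokM_count_row _ _ rfl
        have c4 : (tokM i j t.1).count ((i : ℕ), (k2 : ℕ)) = 0 := tokM_count_row _ _ rfl
        have w1 : ¬(k2 = k1) := fun h => h12 h.symm
        have w3 : ¬(k2 = k3) := fun h => h12 (h.trans h13.symm).symm
        simp [hms, Multiset.count_cons, Multiset.count_add, Fin.val_inj, w1, w3,
          c1, c2, c3, c4]
      · refine momProd_eq_zero X hcent (p := ((i : ℕ), (k1 : ℕ))) ?_
        have c1 : (tokM i k1 t.2.2.2).count ((i : ℕ), (k1 : ℕ)) = 0 := tokM_count_row _ _ rfl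
        have c2 : (tokM i k2 t.2.2.1).count ((i : ℕ), (k1 : ℕ)) = 0 := tokM_count_row _ _ rfl
        have c3 : (tokM i k3 t.2.1).count ((i : ℕ), (k1 : ℕ)) = 0 := tokM_count_row _ _ rfl
        have c4 : (tokM i j t.1).count ((i : ℕ), (k1 : ℕ)) = 0 := tokM_count_row _ _ rfl
        simp [hms, Multiset.count_cons, Multiset.count_add, Fin.val_inj, h12, h13,
          c1, c2, c3, c4]


lemma sum_mul3 {α : Type*} [Fintype α] (y : ℝ) (f1 f2 f3 : α → ℝ) :
    (∑ a, f1 a) * (∑ a, f2 a) * (∑ a, f3 a) * y =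
    ∑ a, ∑ b, ∑ c, f1 c * f2 b * f3 a * y := by
  simp only [Finset.sum_mul, Finset.mul_sum]

end DetCof

open DetCof

/-- For i.i.d. centered entries with third moment `μ₃`,
`E[det(B)³ · S] = n² μ₃ E[det(B')⁴]` where `B` is `n × n` (here `n = m + 1`),
`S` is the sum of all cofactors of `B`, and `B'` is `(n-1) × (n-1)`. -/
theorem expectation_det_cubed_mul_cofactor_sum
    {Ω : Type*} [MeasureSpace Ω] [IsProbabilityMeasure (ℙ : Measure Ω)]
    (m : ℕ) (X : ℕ × ℕ → Ω → ℝ)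
    (hmeas : ∀ p, Measurable (X p))
    (hindep : iIndepFun X ℙ)
    (hident : ∀ p, Measure.map (X p) ℙ = Measure.map (X (0, 0)) ℙ)
    (hcent : (∫ ω, X (0, 0) ω) = 0)
    (hmom4 : Integrable (fun ω => (X (0, 0) ω) ^ 4) ℙ)
    (μ₃ : ℝ) (hμ₃ : μ₃ = ∫ ω, (X (0, 0) ω) ^ 3) :
    (∫ ω, (Matrix.det (Matrix.of fun i j : Fin (m + 1) => X ((i : ℕ), (j : ℕ)) ω)) ^ 3 *
        ∑ i : Fin (m + 1), ∑ j : Fin (m + 1),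
          (-1 : ℝ) ^ ((i : ℕ) + (j : ℕ)) *
            Matrix.det ((Matrix.of fun i' j' : Fin (m + 1) =>
              X ((i' : ℕ), (j' : ℕ)) ω).submatrix i.succAbove j.succAbove)) =
      ((m : ℝ) + 1) ^ 2 * μ₃ *
        ∫ ω, (Matrix.det (Matrix.of fun i j : Fin m => X ((i : ℕ), (j : ℕ)) ω)) ^ 4 := by
  classical
  have hkey := fun (i j k1 k2 k3 : Fin (m + 1)) =>
    DetCof.key X hmeas hindep hident hcent hmom4 i j k1 k2 k3
  have hrow : ∀ (i : Fin (m + 1)) (ω : Ω),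
      (Matrix.det (Matrix.of fun a b : Fin (m + 1) => X ((a : ℕ), (b : ℕ)) ω))
        = ∑ k : Fin (m + 1), (-1 : ℝ) ^ ((i : ℕ) + (k : ℕ)) * X ((i : ℕ), (k : ℕ)) ω * mdet X i k ω := by
    intro i ω
    have h := Matrix.det_succ_row (Matrix.of fun a b : Fin (m + 1) => X ((a : ℕ), (b : ℕ)) ω) i
    simpa [DetCof.mdet] using h
  -- main evaluation for each (i, j)
  have main : ∀ i j : Fin (m + 1),
      Integrable (fun ω =>
        (Matrix.det (Matrix.of fun a b : Fin (m + 1) => X ((a : ℕ), (b : ℕ)) ω)) ^ 3 *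
          mdet X i j ω) ℙ ∧
      (∫ ω, (Matrix.det (Matrix.of fun a b : Fin (m + 1) => X ((a : ℕ), (b : ℕ)) ω)) ^ 3 *
          mdet X i j ω)
        = (-1 : ℝ) ^ ((i : ℕ) + (j : ℕ)) * (-1 : ℝ) ^ ((i : ℕ) + (j : ℕ))
            * (-1 : ℝ) ^ ((i : ℕ) + (j : ℕ)) *
          (momX X 3 *
            ∫ ω, (Matrix.det (Matrix.of fun a b : Fin m => X ((a : ℕ), (b : ℕ)) ω)) ^ 4) := by
    intro i j
    have hexp : ∀ ω,
        (Matrix.det (Matrix.of fun a b : Fin (m + 1) => X ((a : ℕ), (b : ℕ)) ω)) ^ 3 *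
          mdet X i j ω
        = ∑ k1 : Fin (m + 1), ∑ k2 : Fin (m + 1), ∑ k3 : Fin (m + 1),
            ((-1 : ℝ) ^ ((i : ℕ) + (k1 : ℕ)) * (-1 : ℝ) ^ ((i : ℕ) + (k2 : ℕ))
              * (-1 : ℝ) ^ ((i : ℕ) + (k3 : ℕ))) *
            (X ((i : ℕ), (k1 : ℕ)) ω * X ((i : ℕ), (k2 : ℕ)) ω * X ((i : ℕ), (k3 : ℕ)) ω *
              (mdet X i k1 ω * mdet X i k2 ω * mdet X i k3 ω * mdet X i j ω)) := by
      intro ω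
      calc (Matrix.det (Matrix.of fun a b : Fin (m + 1) => X ((a : ℕ), (b : ℕ)) ω)) ^ 3 *
            mdet X i j ω
          = (Matrix.det (Matrix.of fun a b : Fin (m + 1) => X ((a : ℕ), (b : ℕ)) ω)) *
            (Matrix.det (Matrix.of fun a b : Fin (m + 1) => X ((a : ℕ), (b : ℕ)) ω)) *
            (Matrix.det (Matrix.of fun a b : Fin (m + 1) => X ((a : ℕ), (b : ℕ)) ω)) *
            mdet X i j ω := by ring
        _ = ∑ k1 : Fin (m + 1), ∑ k2 : Fin (m + 1), ∑ k3 : Fin (m + 1),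
              ((-1 : ℝ) ^ ((i : ℕ) + (k3 : ℕ)) * X ((i : ℕ), (k3 : ℕ)) ω * mdet X i k3 ω) *
              ((-1 : ℝ) ^ ((i : ℕ) + (k2 : ℕ)) * X ((i : ℕ), (k2 : ℕ)) ω * mdet X i k2 ω) *
              ((-1 : ℝ) ^ ((i : ℕ) + (k1 : ℕ)) * X ((i : ℕ), (k1 : ℕ)) ω * mdet X i k1 ω) *
              mdet X i j ω := by rw [hrow i ω, sum_mul3]
        _ = _ := by
            refine Finset.sum_congr rfl fun k1 _ => ?_
            refine Finset.sum_congr rfl fun k2 _ => ?_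
            refine Finset.sum_congr rfl fun k3 _ => ?_
            ring
    have T1 : ∀ k1 k2 k3 : Fin (m + 1), Integrable (fun ω =>
        ((-1 : ℝ) ^ ((i : ℕ) + (k1 : ℕ)) * (-1 : ℝ) ^ ((i : ℕ) + (k2 : ℕ))
          * (-1 : ℝ) ^ ((i : ℕ) + (k3 : ℕ))) *
        (X ((i : ℕ), (k1 : ℕ)) ω * X ((i : ℕ), (k2 : ℕ)) ω * X ((i : ℕ), (k3 : ℕ)) ω *
          (mdet X i k1 ω * mdet X i k2 ω * mdet X i k3 ω * mdet X i j ω))) ℙ :=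
      fun k1 k2 k3 => ((hkey i j k1 k2 k3).1).const_mul _
    have T2 : ∀ k1 k2 : Fin (m + 1), Integrable (fun ω => ∑ k3 : Fin (m + 1),
        ((-1 : ℝ) ^ ((i : ℕ) + (k1 : ℕ)) * (-1 : ℝ) ^ ((i : ℕ) + (k2 : ℕ))
          * (-1 : ℝ) ^ ((i : ℕ) + (k3 : ℕ))) *
        (X ((i : ℕ), (k1 : ℕ)) ω * X ((i : ℕ), (k2 : ℕ)) ω * X ((i : ℕ), (k3 : ℕ)) ω *
          (mdet X i k1 ω * mdet X i k2 ω * mdet X i k3 ω * mdet X i j ω))) ℙ :=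
      fun k1 k2 => integrable_finset_sum _ fun k3 _ => T1 k1 k2 k3
    have T3 : ∀ k1 : Fin (m + 1), Integrable (fun ω => ∑ k2 : Fin (m + 1), ∑ k3 : Fin (m + 1),
        ((-1 : ℝ) ^ ((i : ℕ) + (k1 : ℕ)) * (-1 : ℝ) ^ ((i : ℕ) + (k2 : ℕ))
          * (-1 : ℝ) ^ ((i : ℕ) + (k3 : ℕ))) *
        (X ((i : ℕ), (k1 : ℕ)) ω * X ((i : ℕ), (k2 : ℕ)) ω * X ((i : ℕ), (k3 : ℕ)) ω *
          (mdet X i k1 ω * mdet X i k2 ω * mdet X i k3 ω * mdet X i j ω))) ℙ :=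
      fun k1 => integrable_finset_sum _ fun k2 _ => T2 k1 k2
    constructor
    · rw [show (fun ω =>
          (Matrix.det (Matrix.of fun a b : Fin (m + 1) => X ((a : ℕ), (b : ℕ)) ω)) ^ 3 *
            mdet X i j ω) = _ from funext hexp]
      exact integrable_finset_sum _ fun k1 _ => T3 k1
    · rw [show (fun ω =>
          (Matrix.det (Matrix.of fun a b : Fin (m + 1) => X ((a : ℕ), (b : ℕ)) ω)) ^ 3 *
            mdet X i j ω) = _ from funext hexp]
      rw [integral_finset_sum _ fun k1 _ => T3 k1]
      have hmid : ∀ k1 : Fin (m + 1),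
          (∫ ω, ∑ k2 : Fin (m + 1), ∑ k3 : Fin (m + 1),
            ((-1 : ℝ) ^ ((i : ℕ) + (k1 : ℕ)) * (-1 : ℝ) ^ ((i : ℕ) + (k2 : ℕ))
              * (-1 : ℝ) ^ ((i : ℕ) + (k3 : ℕ))) *
            (X ((i : ℕ), (k1 : ℕ)) ω * X ((i : ℕ), (k2 : ℕ)) ω * X ((i : ℕ), (k3 : ℕ)) ω *
              (mdet X i k1 ω * mdet X i k2 ω * mdet X i k3 ω * mdet X i j ω)))
          = ∑ k2 : Fin (m + 1), ∑ k3 : Fin (m + 1),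
            ((-1 : ℝ) ^ ((i : ℕ) + (k1 : ℕ)) * (-1 : ℝ) ^ ((i : ℕ) + (k2 : ℕ))
              * (-1 : ℝ) ^ ((i : ℕ) + (k3 : ℕ))) *
            (if k1 = j ∧ k2 = j ∧ k3 = j then
              momX X 3 *
                ∫ ω, (Matrix.det (Matrix.of fun a b : Fin m => X ((a : ℕ), (b : ℕ)) ω)) ^ 4
             else 0) := by
        intro k1
        rw [integral_finset_sum _ fun k2 _ => T2 k1 k2]
        refine Finset.sum_congr rfl fun k2 _ => ?_
        rw [integral_finset_sum _ fun k3 _ => T1 k1 k2 k3]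
        refine Finset.sum_congr rfl fun k3 _ => ?_
        rw [integral_const_mul, (hkey i j k1 k2 k3).2]
      rw [Finset.sum_congr rfl fun k1 _ => hmid k1]
      have hterm : ∀ k1 k2 k3 : Fin (m + 1),
            ((-1 : ℝ) ^ ((i : ℕ) + (k1 : ℕ)) * (-1 : ℝ) ^ ((i : ℕ) + (k2 : ℕ))
              * (-1 : ℝ) ^ ((i : ℕ) + (k3 : ℕ))) *
            (if k1 = j ∧ k2 = j ∧ k3 = j then
              momX X 3 *
                ∫ ω, (Matrix.det (Matrix.of fun a b : Fin m => X ((a : ℕ), (b : ℕ)) ω)) ^ 4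
             else 0)
            = if k3 = j then (if k2 = j then (if k1 = j then
                ((-1 : ℝ) ^ ((i : ℕ) + (k1 : ℕ)) * (-1 : ℝ) ^ ((i : ℕ) + (k2 : ℕ))
                  * (-1 : ℝ) ^ ((i : ℕ) + (k3 : ℕ))) *
                (momX X 3 *
                  ∫ ω, (Matrix.det (Matrix.of fun a b : Fin m => X ((a : ℕ), (b : ℕ)) ω)) ^ 4)
               else 0) else 0) else 0 := by
          intro k1 k2 k3
          by_cases h1 : k1 = j <;> by_cases h2 : k2 = j <;> by_cases h3 : k3 = j <;>
            simp [h1, h2, h3]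
      simp only [hterm, Finset.sum_ite_eq', Finset.mem_univ, if_true]
  -- assemble
  have hsplit : (fun ω =>
      (Matrix.det (Matrix.of fun i j : Fin (m + 1) => X ((i : ℕ), (j : ℕ)) ω)) ^ 3 *
        ∑ i : Fin (m + 1), ∑ j : Fin (m + 1),
          (-1 : ℝ) ^ ((i : ℕ) + (j : ℕ)) *
            Matrix.det ((Matrix.of fun i' j' : Fin (m + 1) =>
              X ((i' : ℕ), (j' : ℕ)) ω).submatrix i.succAbove j.succAbove))
      = fun ω => ∑ i : Fin (m + 1), ∑ j : Fin (m + 1),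
          (-1 : ℝ) ^ ((i : ℕ) + (j : ℕ)) *
            ((Matrix.det (Matrix.of fun a b : Fin (m + 1) => X ((a : ℕ), (b : ℕ)) ω)) ^ 3 *
              mdet X i j ω) := by
    funext ω
    rw [Finset.mul_sum]
    refine Finset.sum_congr rfl fun i _ => ?_
    rw [Finset.mul_sum]
    refine Finset.sum_congr rfl fun j _ => ?_
    simp only [DetCof.mdet]
    ring
  rw [hsplit,
    integral_finset_sum _ fun i _ => integrable_finset_sum _ fun j _ => ((main i j).1.const_mul _)]
  have houter : ∀ i : Fin (m + 1),
      (∫ ω, ∑ j : Fin (m + 1), (-1 : ℝ) ^ ((i : ℕ) + (j : ℕ)) *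
          ((Matrix.det (Matrix.of fun a b : Fin (m + 1) => X ((a : ℕ), (b : ℕ)) ω)) ^ 3 *
            mdet X i j ω))
      = ∑ j : Fin (m + 1), (-1 : ℝ) ^ ((i : ℕ) + (j : ℕ)) *
          ((-1 : ℝ) ^ ((i : ℕ) + (j : ℕ)) * (-1 : ℝ) ^ ((i : ℕ) + (j : ℕ))
            * (-1 : ℝ) ^ ((i : ℕ) + (j : ℕ)) *
          (momX X 3 *
            ∫ ω, (Matrix.det (Matrix.of fun a b : Fin m => X ((a : ℕ), (b : ℕ)) ω)) ^ 4)) := by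
    intro i
    rw [integral_finset_sum _ fun j _ => ((main i j).1.const_mul _)]
    refine Finset.sum_congr rfl fun j _ => ?_
    rw [integral_const_mul, (main i j).2]
  rw [Finset.sum_congr rfl fun i _ => houter i]
  have hsgn : ∀ (a : ℕ) (y : ℝ), (-1 : ℝ) ^ a *
        ((-1 : ℝ) ^ a * (-1 : ℝ) ^ a * (-1 : ℝ) ^ a * y) = y := by
      intro a y
      rcases Nat.even_or_odd a with h | h
      · rw [h.neg_one_pow]; ring
      · rw [h.neg_one_pow]; ring
  simp only [hsgn]
  have hmu : DetCof.momX X 3 = μ₃ := hμ₃.symm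
  simp only [Finset.sum_const, Finset.card_univ, Fintype.card_fin, nsmul_eq_mul, hmu]
  push_cast
  ring
end

section
/- Let X_{ij} be i.i.d. centered random variables with finite fourth moment and B = (X_{ij})_{n×n} for n ≥ 4. Then E[det(B_{11}) · det(B_{12}) · det(B_{13}) · det(B_{14})] = 0, where B_{1k} is B with row 1 and column k deleted. -/
open MeasureTheory ProbabilityTheory Nat

section Aux

variable {Ω : Type*} [MeasureSpace Ω] [IsProbabilityMeasure (ℙ : Measure Ω)]
    (X : ℕ × ℕ → Ω → ℝ)
    (hmeas : ∀ p, Measurable (X p))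
    (hindep : iIndepFun X ℙ)
    (hident : ∀ p, Measure.map (X p) ℙ = Measure.map (X (0, 0)) ℙ)
    (hcent : (∫ ω, X (0, 0) ω) = 0)
    (hmom4 : Integrable (fun ω => (X (0, 0) ω) ^ 4) ℙ)

include hmeas hident hmom4 in
lemma aux_int_pow (p : ℕ × ℕ) {j : ℕ} (hj : j ≤ 4) :
    Integrable (fun ω => X p ω ^ j) ℙ := by
  have h00 : Integrable (fun ω => X (0,0) ω ^ j) ℙ := by
    refine Integrable.mono' ((integrable_const (1:ℝ)).add hmom4)
      ((hmeas (0,0)).pow_const j).aestronglyMeasurable ?_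
    filter_upwards with ω
    have h4 : (0:ℝ) ≤ X (0,0) ω ^ 4 := by positivity
    rcases le_or_gt (|X (0,0) ω|) 1 with h | h
    · have : |X (0,0) ω| ^ j ≤ 1 := pow_le_one₀ (abs_nonneg _) h
      calc ‖X (0,0) ω ^ j‖ = |X (0,0) ω| ^ j := by rw [Real.norm_eq_abs, abs_pow]
        _ ≤ 1 := this
        _ ≤ 1 + X (0,0) ω ^ 4 := by linarith
    · have h1 : |X (0,0) ω| ^ j ≤ |X (0,0) ω| ^ 4 := pow_le_pow_right₀ h.le hj
      calc ‖X (0,0) ω ^ j‖ = |X (0,0) ω| ^ j := by rw [Real.norm_eq_abs, abs_pow]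
        _ ≤ |X (0,0) ω| ^ 4 := h1
        _ = X (0,0) ω ^ 4 := by rw [← abs_pow, abs_of_nonneg h4]
        _ ≤ 1 + X (0,0) ω ^ 4 := by linarith
  have hm : AEStronglyMeasurable (fun x : ℝ => x ^ j) (Measure.map (X (0,0)) ℙ) :=
    (measurable_id.pow_const j).aestronglyMeasurable
  have h1 : Integrable (fun x : ℝ => x ^ j) (Measure.map (X (0,0)) ℙ) :=
    (integrable_map_measure hm (hmeas (0,0)).aemeasurable).mpr h00
  rw [← hident p] at h1
  have h2 := (integrable_map_measure (by rw [hident p]; exact hm)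
    (hmeas p).aemeasurable).mp h1
  exact h2

include hmeas hident hcent in
lemma aux_integral_zero (p : ℕ × ℕ) : (∫ ω, X p ω) = 0 := by
  have h1 : ∫ ω, X p ω = ∫ x, x ∂(Measure.map (X p) ℙ) :=
    (integral_map (hmeas p).aemeasurable aestronglyMeasurable_id).symm
  have h2 : ∫ x, x ∂(Measure.map (X (0,0)) ℙ) = ∫ ω, X (0,0) ω := by
    simpa using integral_map (hmeas (0,0)).aemeasurable aestronglyMeasurable_id
  rw [h1, hident p, h2]
  exact hcent

include hmeas hindep hident hmom4 in
lemma aux_integrable_prod (S : Finset (ℕ × ℕ)) (mu : ℕ × ℕ → ℕ)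
    (hmu : ∀ p ∈ S, mu p ≤ 4) :
    Integrable (fun ω => ∏ p ∈ S, X p ω ^ mu p) ℙ := by
  classical
  set g : ℕ × ℕ → Ω → ℝ := fun p ω => X p ω ^ mu p with hg
  have hgmeas : ∀ p, Measurable (g p) := fun p => (hmeas p).pow_const _
  have hgindep : iIndepFun g ℙ :=
    hindep.comp (fun p x => x ^ mu p) (fun p => measurable_id.pow_const _)
  induction S using Finset.induction_on with
  | empty => simp only [Finset.prod_empty]; exact integrable_const (1:ℝ)
  | @insert q s hq ih =>
    have h1 : Integrable (fun ω => ∏ p ∈ s, X p ω ^ mu p) ℙ :=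
      ih (fun p hp => hmu p (Finset.mem_insert_of_mem hp))
    have hfun : (∏ j ∈ s, g j) = fun ω => ∏ p ∈ s, X p ω ^ mu p := by
      funext ω; simp [hg, Finset.prod_apply]
    have h2 : IndepFun (∏ j ∈ s, g j) (g q) ℙ :=
      hgindep.indepFun_finsetProd_of_notMem hgmeas hq
    have h3 := h2.integrable_mul (by rwa [hfun])
      (aux_int_pow X hmeas hident hmom4 q (hmu q (Finset.mem_insert_self q s)))
    have h4 : (fun ω => ∏ p ∈ Insert.insert q s, X p ω ^ mu p)
        = (∏ j ∈ s, g j) * g q := by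
      funext ω
      simp only [Finset.prod_insert hq, Pi.mul_apply, hfun, hg, Finset.prod_apply]
      ring
    rw [h4]; exact h3

include hmeas hindep hident hcent hmom4 in
lemma aux_integral_prod_zero (S : Finset (ℕ × ℕ)) (mu : ℕ × ℕ → ℕ)
    (hmu : ∀ p ∈ S, mu p ≤ 4) {p₀ : ℕ × ℕ} (hp₀ : p₀ ∈ S) (h1 : mu p₀ = 1) :
    (∫ ω, ∏ p ∈ S, X p ω ^ mu p) = 0 := by
  classical
  set g : ℕ × ℕ → Ω → ℝ := fun p ω => X p ω ^ mu p with hg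
  have hgmeas : ∀ p, Measurable (g p) := fun p => (hmeas p).pow_const _
  have hgindep : iIndepFun g ℙ :=
    hindep.comp (fun p x => x ^ mu p) (fun p => measurable_id.pow_const _)
  have hfun : (∏ j ∈ S.erase p₀, g j) = fun ω => ∏ p ∈ S.erase p₀, X p ω ^ mu p := by
    funext ω; simp [hg, Finset.prod_apply]
  have hint : Integrable (∏ j ∈ S.erase p₀, g j) ℙ := by
    rw [hfun]
    exact aux_integrable_prod X hmeas hindep hident hmom4 _ mu
      (fun p hp => hmu p (Finset.mem_of_mem_erase hp))
  have h2 : IndepFun (∏ j ∈ S.erase p₀, g j) (g p₀) ℙ :=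
    hgindep.indepFun_finsetProd_of_notMem hgmeas (Finset.notMem_erase p₀ S)
  have h3 := h2.integral_mul_eq_mul_integral hint.aestronglyMeasurable
    (aux_int_pow X hmeas hident hmom4 p₀ (by omega)).aestronglyMeasurable
  have h4 : (∫ ω, g p₀ ω) = 0 := by
    have : g p₀ = fun ω => X p₀ ω := by funext ω; simp [hg, h1]
    rw [this]
    exact aux_integral_zero X hmeas hident hcent p₀
  calc (∫ ω, ∏ p ∈ S, X p ω ^ mu p)
      = ∫ ω, ((∏ j ∈ S.erase p₀, g j) * g p₀) ω := by
        congr 1; funext ω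
        simp only [Pi.mul_apply, hfun]
        rw [← Finset.prod_erase_mul S _ hp₀]
    _ = (∫ ω, (∏ j ∈ S.erase p₀, g j) ω) * ∫ ω, g p₀ ω := h3
    _ = 0 := by rw [h4, mul_zero]

include hmeas hindep hident hmom4 in
lemma aux_term_integrable {α : Type*} [Fintype α] [DecidableEq α] (F : α → ℕ × ℕ)
    (hfib : ∀ a : α, (Finset.univ.filter fun b => F b = F a).card ≤ 4) :
    Integrable (fun ω => ∏ a, X (F a) ω) ℙ := by
  have key : (fun ω => ∏ a, X (F a) ω)
      = fun ω => ∏ p ∈ Finset.univ.image F,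
          X p ω ^ (Finset.univ.filter fun a => F a = p).card := by
    funext ω
    exact Finset.prod_comp (fun p => X p ω) F
  rw [key]
  refine aux_integrable_prod X hmeas hindep hident hmom4 _ _ ?_
  intro p hp
  obtain ⟨a, -, rfl⟩ := Finset.mem_image.mp hp
  exact hfib a

include hmeas hindep hident hcent hmom4 in
lemma aux_term_zero {α : Type*} [Fintype α] [DecidableEq α] (F : α → ℕ × ℕ)
    (hfib : ∀ a : α, (Finset.univ.filter fun b => F b = F a).card ≤ 4)
    (a₀ : α) (h1 : (Finset.univ.filter fun b => F b = F a₀).card = 1) :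
    (∫ ω, ∏ a, X (F a) ω) = 0 := by
  have key : (fun ω => ∏ a, X (F a) ω)
      = fun ω => ∏ p ∈ Finset.univ.image F,
          X p ω ^ (Finset.univ.filter fun a => F a = p).card := by
    funext ω
    exact Finset.prod_comp (fun p => X p ω) F
  rw [show (∫ ω, ∏ a, X (F a) ω)
      = ∫ ω, ∏ p ∈ Finset.univ.image F,
          X p ω ^ (Finset.univ.filter fun a => F a = p).card from by rw [← key]]
  refine aux_integral_prod_zero X hmeas hindep hident hcent hmom4 _ _ ?_
    (Finset.mem_image_of_mem F (Finset.mem_univ a₀)) h1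
  intro p hp
  obtain ⟨a, -, rfl⟩ := Finset.mem_image.mp hp
  exact hfib a

end Aux

/-- entry map for the product of minors -/
def entMap (n : ℕ) (g : Fin 4 → Equiv.Perm (Fin (n+3))) (col : Fin 4 → Fin (n+4))
    (a : Fin 4 × Fin (n+3)) : ℕ × ℕ :=
  (((0:Fin (n+4)).succAbove (g a.1 a.2) : ℕ), ((col a.1).succAbove a.2 : ℕ))

lemma entMap_eq_iff (n : ℕ) (g : Fin 4 → Equiv.Perm (Fin (n+3))) (col : Fin 4 → Fin (n+4))
    (a b : Fin 4 × Fin (n+3)) :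
    entMap n g col a = entMap n g col b ↔
      (g a.1 a.2 = g b.1 b.2 ∧ (col a.1).succAbove a.2 = (col b.1).succAbove b.2) := by
  unfold entMap
  rw [Prod.mk.injEq]
  constructor
  · rintro ⟨h1, h2⟩
    refine ⟨?_, Fin.val_injective h2⟩
    have := Fin.val_injective h1
    simpa [Fin.zero_succAbove] using Fin.succ_injective _ (by simpa [Fin.zero_succAbove] using this)
  · rintro ⟨h1, h2⟩
    exact ⟨by rw [h1], by rw [h2]⟩

lemma comb_singleton (n : ℕ) (g : Fin 4 → Equiv.Perm (Fin (n+3))) (col : Fin 4 → Fin (n+4))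
    (hcol : ∀ k, ((col k) : ℕ) = (k : ℕ)) :
    ∃ a₀ : Fin 4 × Fin (n+3), ∀ a : Fin 4 × Fin (n+3),
      entMap n g col a = entMap n g col a₀ → a = a₀ := by
  have hcolinj : Function.Injective col := fun x y h => by
    apply Fin.val_injective; rw [← hcol x, ← hcol y, h]
  have hcol0 : col 0 = 0 := by apply Fin.val_injective; rw [hcol 0]; rfl
  have hcolne : ∀ k : Fin 4, k ≠ 0 → col k ≠ 0 := by
    intro k hk h
    exact hk (hcolinj (h.trans hcol0.symm))
  -- case analysis
  by_cases hA : g 1 0 = g 2 0 ∧ g 1 0 = g 3 0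
  · -- all three first-column rows coincide
    refine ⟨(0, (g 0).symm (g 1 0)), ?_⟩
    rintro ⟨k, i⟩ h
    rw [entMap_eq_iff] at h
    obtain ⟨hr, hc⟩ := h
    simp only at hr hc
    rw [Equiv.apply_symm_apply] at hr
    by_cases hk : k = 0
    · subst hk
      have : i = (g 0).symm (g 1 0) := by
        apply (g 0).injective
        rw [hr, Equiv.apply_symm_apply]
      rw [this]
    · -- k ≠ 0 : then g k i = g 1 0 = g k 0, so i = 0, and column is 0, contradiction
      exfalso
      have hgk0 : g k 0 = g 1 0 := by
        fin_cases k
        · exact absurd rfl hk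
        · rfl
        · exact hA.1.symm
        · exact hA.2.symm
      have hi : i = 0 := (g k).injective (hr.trans hgk0.symm)
      rw [hi, Fin.succAbove_ne_zero_zero (hcolne k hk), hcol0, Fin.zero_succAbove] at hc
      exact (Fin.succ_ne_zero _) hc.symm
  · -- some a ∈ {1,2,3} has a unique value g a 0
    have main : ∀ a : Fin 4, a ≠ 0 → (∀ k : Fin 4, k ≠ 0 → g k 0 = g a 0 → k = a) →
        ∀ b : Fin 4 × Fin (n+3), entMap n g col b = entMap n g col (a, 0) → b = (a, 0) := by
      intro a ha hu ⟨k, i⟩ h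
      rw [entMap_eq_iff] at h
      obtain ⟨hr, hc⟩ := h
      simp only at hr hc
      rw [Fin.succAbove_ne_zero_zero (hcolne a ha)] at hc
      have hk : k ≠ 0 := by
        intro hk0
        rw [hk0, hcol0, Fin.zero_succAbove] at hc
        exact (Fin.succ_ne_zero _) hc
      have hi : i = 0 := (Fin.succAbove_eq_zero_iff (hcolne k hk)).mp hc
      subst hi
      have := hu k hk (hr.trans rfl)
      rw [this]
    push_neg at hA
    by_cases h12 : g 1 0 = g 2 0
    · -- g 3 0 unique
      have h13 : g 1 0 ≠ g 3 0 := hA h12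
      refine ⟨(3, 0), main 3 (by decide) ?_⟩
      intro k hk hke
      fin_cases k
      · exact absurd rfl hk
      · exact absurd hke h13
      · exact absurd hke (h12 ▸ h13)
      · rfl
    · by_cases h13 : g 1 0 = g 3 0
      · -- g 2 0 unique
        refine ⟨(2, 0), main 2 (by decide) ?_⟩
        intro k hk hke
        fin_cases k
        · exact absurd rfl hk
        · exact absurd hke h12
        · rfl
        · exact absurd (h13.trans hke) h12
      · -- g 1 0 unique
        refine ⟨(1, 0), main 1 (by decide) ?_⟩
        intro k hk hke
        fin_cases k
        · exact absurd rfl hk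
        · rfl
        · exact absurd hke.symm h12
        · exact absurd hke.symm h13

/-- For i.i.d. centered entries with finite fourth moment and `B` of size
`n × n` with `n ≥ 4` (here `n = m + 4`),
`E[det(B₁₁) det(B₁₂) det(B₁₃) det(B₁₄)] = 0`. -/
theorem expectation_prod_first_row_minors
    {Ω : Type*} [MeasureSpace Ω] [IsProbabilityMeasure (ℙ : Measure Ω)]
    (m : ℕ) (X : ℕ × ℕ → Ω → ℝ)
    (hmeas : ∀ p, Measurable (X p))
    (hindep : iIndepFun X ℙ)
    (hident : ∀ p, Measure.map (X p) ℙ = Measure.map (X (0, 0)) ℙ)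
    (hcent : (∫ ω, X (0, 0) ω) = 0)
    (hmom4 : Integrable (fun ω => (X (0, 0) ω) ^ 4) ℙ) :
    (∫ ω,
        Matrix.det ((Matrix.of fun i j : Fin (m + 4) =>
          X ((i : ℕ), (j : ℕ)) ω).submatrix
            (0 : Fin (m + 4)).succAbove (0 : Fin (m + 4)).succAbove) *
        Matrix.det ((Matrix.of fun i j : Fin (m + 4) =>
          X ((i : ℕ), (j : ℕ)) ω).submatrix
            (0 : Fin (m + 4)).succAbove (1 : Fin (m + 4)).succAbove) *
        Matrix.det ((Matrix.of fun i j : Fin (m + 4) =>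
          X ((i : ℕ), (j : ℕ)) ω).submatrix
            (0 : Fin (m + 4)).succAbove (2 : Fin (m + 4)).succAbove) *
        Matrix.det ((Matrix.of fun i j : Fin (m + 4) =>
          X ((i : ℕ), (j : ℕ)) ω).submatrix
            (0 : Fin (m + 4)).succAbove (3 : Fin (m + 4)).succAbove)) = 0 := by
  classical
  set col : Fin 4 → Fin (m + 4) := fun k => ⟨(k : ℕ), by omega⟩ with hcoldef
  have hcol : ∀ k, ((col k) : ℕ) = (k : ℕ) := fun k => rfl
  have hc0 : col 0 = (0 : Fin (m + 4)) := by
    apply Fin.val_injective; show ((0 : Fin 4) : ℕ) = (0 : Fin (m+4)).val; rfl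
  have hc1 : col 1 = (1 : Fin (m + 4)) := by
    apply Fin.val_injective; show ((1 : Fin 4) : ℕ) = 1 % (m + 4)
    rw [Nat.mod_eq_of_lt (by omega)]
    rfl
  have hc2 : col 2 = (2 : Fin (m + 4)) := by
    apply Fin.val_injective; show ((2 : Fin 4) : ℕ) = 2 % (m + 4)
    rw [Nat.mod_eq_of_lt (by omega)]
    rfl
  have hc3 : col 3 = (3 : Fin (m + 4)) := by
    apply Fin.val_injective; show ((3 : Fin 4) : ℕ) = 3 % (m + 4)
    rw [Nat.mod_eq_of_lt (by omega)]
    rfl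
  -- abbreviation for the random matrix
  set A : Ω → Matrix (Fin (m + 4)) (Fin (m + 4)) ℝ :=
    fun ω => Matrix.of fun i j : Fin (m + 4) => X ((i : ℕ), (j : ℕ)) ω with hA
  -- the per-factor determinant expansion
  set f : Fin 4 → Equiv.Perm (Fin (m + 3)) → Ω → ℝ := fun k σ ω =>
    ((Equiv.Perm.sign σ : ℤ) : ℝ) *
      ∏ i : Fin (m + 3), X ((((0 : Fin (m+4)).succAbove (σ i)) : ℕ),
        (((col k).succAbove i) : ℕ)) ω with hf
  have hDet : ∀ (k : Fin 4) (ω : Ω),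
      Matrix.det ((A ω).submatrix (col 0).succAbove (col k).succAbove)
        = ∑ σ : Equiv.Perm (Fin (m + 3)), f k σ ω := by
    intro k ω
    rw [hc0, Matrix.det_apply']
    rfl
  have hProd : ∀ ω : Ω,
      (Matrix.det ((A ω).submatrix (0 : Fin (m+4)).succAbove (0 : Fin (m+4)).succAbove) *
       Matrix.det ((A ω).submatrix (0 : Fin (m+4)).succAbove (1 : Fin (m+4)).succAbove) *
       Matrix.det ((A ω).submatrix (0 : Fin (m+4)).succAbove (2 : Fin (m+4)).succAbove) *
       Matrix.det ((A ω).submatrix (0 : Fin (m+4)).succAbove (3 : Fin (m+4)).succAbove))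
      = ∑ g ∈ Fintype.piFinset (fun _ : Fin 4 => (Finset.univ : Finset (Equiv.Perm (Fin (m+3))))),
          (∏ k : Fin 4, ((Equiv.Perm.sign (g k) : ℤ) : ℝ)) *
            ∏ a : Fin 4 × Fin (m + 3), X (entMap m g col a) ω := by
    intro ω
    have step1 : (Matrix.det ((A ω).submatrix (0 : Fin (m+4)).succAbove (0 : Fin (m+4)).succAbove) *
       Matrix.det ((A ω).submatrix (0 : Fin (m+4)).succAbove (1 : Fin (m+4)).succAbove) *
       Matrix.det ((A ω).submatrix (0 : Fin (m+4)).succAbove (2 : Fin (m+4)).succAbove) *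
       Matrix.det ((A ω).submatrix (0 : Fin (m+4)).succAbove (3 : Fin (m+4)).succAbove))
        = ∏ k : Fin 4, ∑ σ : Equiv.Perm (Fin (m + 3)), f k σ ω := by
      rw [Fin.prod_univ_four, ← hc0, ← hc1, ← hc2, ← hc3, hDet 0 ω, hDet 1 ω, hDet 2 ω,
        hDet 3 ω]
    rw [step1, Finset.prod_univ_sum]
    refine Finset.sum_congr rfl fun g _ => ?_
    rw [hf]
    simp only
    rw [Finset.prod_mul_distrib]
    congr 1
    rw [Fintype.prod_prod_type]
    rfl
  -- fiber cardinality bound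
  have hfib : ∀ (g : Fin 4 → Equiv.Perm (Fin (m + 3))) (a : Fin 4 × Fin (m + 3)),
      (Finset.univ.filter fun b => entMap m g col b = entMap m g col a).card ≤ 4 := by
    intro g a
    refine le_trans (Finset.card_le_card_of_injOn (fun b : Fin 4 × Fin (m+3) => b.1)
      (fun b _ => Finset.mem_univ b.1) ?_) (by simp)
    intro b hb c hc h1
    simp only [Finset.coe_filter, Set.mem_setOf_eq, Finset.mem_univ, true_and] at hb hc
    have hbc : entMap m g col b = entMap m g col c := hb.trans hc.symm
    rw [entMap_eq_iff] at hbc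
    have h1' : b.1 = c.1 := h1
    have h2 := hbc.2
    rw [h1'] at h2
    exact Prod.ext h1' (Fin.succAbove_right_injective h2)
  -- rewrite the integral
  calc (∫ ω,
        Matrix.det ((A ω).submatrix (0 : Fin (m+4)).succAbove (0 : Fin (m+4)).succAbove) *
        Matrix.det ((A ω).submatrix (0 : Fin (m+4)).succAbove (1 : Fin (m+4)).succAbove) *
        Matrix.det ((A ω).submatrix (0 : Fin (m+4)).succAbove (2 : Fin (m+4)).succAbove) *
        Matrix.det ((A ω).submatrix (0 : Fin (m+4)).succAbove (3 : Fin (m+4)).succAbove))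
      = ∫ ω, ∑ g ∈ Fintype.piFinset (fun _ : Fin 4 => (Finset.univ : Finset (Equiv.Perm (Fin (m+3))))),
          (∏ k : Fin 4, ((Equiv.Perm.sign (g k) : ℤ) : ℝ)) *
            ∏ a : Fin 4 × Fin (m + 3), X (entMap m g col a) ω := by
        simp only [hProd]
    _ = ∑ g ∈ Fintype.piFinset (fun _ : Fin 4 => (Finset.univ : Finset (Equiv.Perm (Fin (m+3))))),
          ∫ ω, (∏ k : Fin 4, ((Equiv.Perm.sign (g k) : ℤ) : ℝ)) *
            ∏ a : Fin 4 × Fin (m + 3), X (entMap m g col a) ω := by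
        refine integral_finset_sum _ fun g _ => ?_
        exact (aux_term_integrable X hmeas hindep hident hmom4 (entMap m g col) (hfib g)).const_mul _
    _ = 0 := by
        refine Finset.sum_eq_zero fun g _ => ?_
        rw [integral_const_mul]
        obtain ⟨a₀, hu⟩ := comb_singleton m g col hcol
        have hcard : (Finset.univ.filter fun b => entMap m g col b = entMap m g col a₀).card = 1 := by
          have hset : (Finset.univ.filter fun b => entMap m g col b = entMap m g col a₀) = {a₀} := by
            ext b
            simp only [Finset.mem_filter, Finset.mem_univ, true_and, Finset.mem_singleton]
            exact ⟨fun h => hu b h, fun h => by rw [h]⟩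
          rw [hset, Finset.card_singleton]
        rw [aux_term_zero X hmeas hindep hident hcent hmom4 (entMap m g col) (hfib g) a₀ hcard,
          mul_zero]
end

section
/- Define formal power series in t: G(t) with G(t) = ∑ gₙ tⁿ/(n!)², and suppose real sequences h₀, h₉, h₁₀ satisfy h₀(n) = μ₂·g(n-1) + (n-1)²μ₂²·h₀(n-1), h₉(n) = μ₂·h₀(n-1) + (n-2)²μ₂³·h₀(n-2) + (n-2)²μ₂²·h₉(n-1), h₁₀(n) = (n-2)²μ₂³·h₀(n-2) + (n-2)²μ₂²·h₁₀(n-1), with h₀(0)=h₉(0)=h₉(1)=h₁₀(0)=h₁₀(1)=0. Then the generating functions H₀(t) = ∑ n²h₀(n)tⁿ/(n!)², H₉(t) = ∑ n²(n-1)²h₉(n)tⁿ/(n!)², H₁₀(t) = ∑ n²(n-1)²h₁₀(n)tⁿ/(n!)² satisfy H₀(t) = μ₂ t G(t)/(1-μ₂²t), H₉(t) = μ₂²t²(1+μ₂²t)G(t)/(1-μ₂²t)², H₁₀(t) = μ₂⁴t³ G(t)/(1-μ₂²t)². -/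
open Nat PowerSeries

private lemma coeff_mul_one_sub_succ (a : ℝ) (f : PowerSeries ℝ) (n : ℕ) :
    PowerSeries.coeff (n+1) (f * (1 - PowerSeries.C a * PowerSeries.X)) =
    PowerSeries.coeff (n+1) f - a * PowerSeries.coeff n f := by
  have h : f * (1 - PowerSeries.C a * PowerSeries.X)
      = f - f * PowerSeries.X * PowerSeries.C a := by ring
  rw [h, map_sub, PowerSeries.coeff_mul_C, PowerSeries.coeff_succ_mul_X]; ring

private lemma coeff_mul_one_sub_zero (a : ℝ) (f : PowerSeries ℝ) :
    PowerSeries.coeff 0 (f * (1 - PowerSeries.C a * PowerSeries.X)) =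
    PowerSeries.coeff 0 f := by
  have h : f * (1 - PowerSeries.C a * PowerSeries.X)
      = f - f * PowerSeries.X * PowerSeries.C a := by ring
  rw [h, map_sub, PowerSeries.coeff_mul_C, PowerSeries.coeff_zero_mul_X]; ring

private lemma coeff_CX_mul_succ (c : ℝ) (f : PowerSeries ℝ) (n : ℕ) :
    PowerSeries.coeff (n+1) (PowerSeries.C c * PowerSeries.X * f) =
    c * PowerSeries.coeff n f := by
  have h : PowerSeries.C c * PowerSeries.X * f
      = f * PowerSeries.X * PowerSeries.C c := by ring
  rw [h, PowerSeries.coeff_mul_C, PowerSeries.coeff_succ_mul_X]; ring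

private lemma coeff_CX_mul_zero (c : ℝ) (f : PowerSeries ℝ) :
    PowerSeries.coeff 0 (PowerSeries.C c * PowerSeries.X * f) = 0 := by
  have h : PowerSeries.C c * PowerSeries.X * f
      = f * PowerSeries.X * PowerSeries.C c := by ring
  rw [h, PowerSeries.coeff_mul_C, PowerSeries.coeff_zero_mul_X]; ring

/-- Solving the recurrences for `h₀, h₉, h₁₀` in terms of generating functions:
`H₀ = μ₂ t G/(1-μ₂²t)`, `H₉ = μ₂²t²(1+μ₂²t)G/(1-μ₂²t)²`,
`H₁₀ = μ₂⁴t³G/(1-μ₂²t)²` (stated multiplied through by the denominators). -/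
theorem aux_generating_functions
    (μ₂ : ℝ) (g h₀ h₉ h₁₀ : ℕ → ℝ)
    (rec₀ : ∀ n, 1 ≤ n →
      h₀ n = μ₂ * g (n - 1) + ((n : ℝ) - 1) ^ 2 * μ₂ ^ 2 * h₀ (n - 1))
    (rec₉ : ∀ n, 2 ≤ n →
      h₉ n = μ₂ * h₀ (n - 1) + ((n : ℝ) - 2) ^ 2 * μ₂ ^ 3 * h₀ (n - 2) +
        ((n : ℝ) - 2) ^ 2 * μ₂ ^ 2 * h₉ (n - 1))
    (rec₁₀ : ∀ n, 2 ≤ n →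
      h₁₀ n = ((n : ℝ) - 2) ^ 2 * μ₂ ^ 3 * h₀ (n - 2) +
        ((n : ℝ) - 2) ^ 2 * μ₂ ^ 2 * h₁₀ (n - 1))
    (init₀ : h₀ 0 = 0) (init₉ : h₉ 0 = 0) (init₉' : h₉ 1 = 0)
    (init₁₀ : h₁₀ 0 = 0) (init₁₀' : h₁₀ 1 = 0)
    (G H₀ H₉ H₁₀ : PowerSeries ℝ)
    (hG : G = PowerSeries.mk fun n => g n / (n ! : ℝ) ^ 2)
    (hH₀ : H₀ = PowerSeries.mk fun n => (n : ℝ) ^ 2 * h₀ n / (n ! : ℝ) ^ 2)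
    (hH₉ : H₉ = PowerSeries.mk fun n =>
      (n : ℝ) ^ 2 * ((n : ℝ) - 1) ^ 2 * h₉ n / (n ! : ℝ) ^ 2)
    (hH₁₀ : H₁₀ = PowerSeries.mk fun n =>
      (n : ℝ) ^ 2 * ((n : ℝ) - 1) ^ 2 * h₁₀ n / (n ! : ℝ) ^ 2) :
    H₀ * (1 - PowerSeries.C (μ₂ ^ 2) * PowerSeries.X) =
        PowerSeries.C μ₂ * PowerSeries.X * G ∧
    H₉ * (1 - PowerSeries.C (μ₂ ^ 2) * PowerSeries.X) ^ 2 =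
        PowerSeries.C (μ₂ ^ 2) * PowerSeries.X ^ 2 *
          (1 + PowerSeries.C (μ₂ ^ 2) * PowerSeries.X) * G ∧
    H₁₀ * (1 - PowerSeries.C (μ₂ ^ 2) * PowerSeries.X) ^ 2 =
        PowerSeries.C (μ₂ ^ 4) * PowerSeries.X ^ 3 * G := by
  have fne : ∀ m : ℕ, ((m ! : ℝ)) ≠ 0 := fun m => Nat.cast_ne_zero.mpr (Nat.factorial_ne_zero m)
  -- Identity A
  have A : H₀ * (1 - PowerSeries.C (μ₂ ^ 2) * PowerSeries.X) =
      PowerSeries.C μ₂ * PowerSeries.X * G := by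
    ext n
    cases n with
    | zero =>
        rw [coeff_mul_one_sub_zero, coeff_CX_mul_zero, hH₀, PowerSeries.coeff_mk]
        simp [init₀]
    | succ m =>
        rw [coeff_mul_one_sub_succ, coeff_CX_mul_succ, hH₀, hG,
          PowerSeries.coeff_mk, PowerSeries.coeff_mk, PowerSeries.coeff_mk]
        have hr := rec₀ (m+1) (by omega)
        simp only [Nat.add_sub_cancel, Nat.cast_add, Nat.cast_one, add_sub_cancel_right] at hr
        rw [hr, Nat.factorial_succ]
        push_cast
        field_simp
        ring
  -- Identity B : H₉ * (1 - aX) = (C μ₂ X + C μ₂³ X²) H₀, written as (C μ₂ + C μ₂³ X) X H₀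
  have B : H₉ * (1 - PowerSeries.C (μ₂ ^ 2) * PowerSeries.X) =
      PowerSeries.C μ₂ * PowerSeries.X * H₀ +
      PowerSeries.C (μ₂ ^ 3) * PowerSeries.X * (PowerSeries.X * H₀) := by
    ext n
    rw [map_add]
    match n with
    | 0 =>
        rw [coeff_mul_one_sub_zero, coeff_CX_mul_zero, coeff_CX_mul_zero, hH₉,
          PowerSeries.coeff_mk]
        simp [init₉]
    | 1 =>
        have h1 : PowerSeries.coeff 0 (PowerSeries.X * H₀) = 0 := by
          rw [mul_comm]; exact PowerSeries.coeff_zero_mul_X (R := ℝ) H₀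
        rw [coeff_mul_one_sub_succ, coeff_CX_mul_succ, coeff_CX_mul_succ, h1, hH₉, hH₀,
          PowerSeries.coeff_mk, PowerSeries.coeff_mk, PowerSeries.coeff_mk]
        simp [init₉, init₉', init₀]
    | (m+2) =>
        rw [coeff_mul_one_sub_succ, coeff_CX_mul_succ, coeff_CX_mul_succ]
        have h1 : PowerSeries.coeff (m+1) (PowerSeries.X * H₀) =
            PowerSeries.coeff m H₀ := by
          rw [mul_comm, PowerSeries.coeff_succ_mul_X]
        rw [h1, hH₉, hH₀, PowerSeries.coeff_mk, PowerSeries.coeff_mk, PowerSeries.coeff_mk,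
          PowerSeries.coeff_mk]
        have hr := rec₉ (m+2) (by omega)
        simp only [Nat.add_sub_cancel, Nat.cast_add, Nat.cast_ofNat] at hr
        norm_num at hr
        rw [hr, Nat.factorial_succ (m+1), Nat.factorial_succ m]
        push_cast
        field_simp
        ring
  -- Identity C
  have Cc : H₁₀ * (1 - PowerSeries.C (μ₂ ^ 2) * PowerSeries.X) =
      PowerSeries.C (μ₂ ^ 3) * PowerSeries.X * (PowerSeries.X * H₀) := by
    ext n
    match n with
    | 0 =>
        rw [coeff_mul_one_sub_zero, coeff_CX_mul_zero, hH₁₀, PowerSeries.coeff_mk]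
        simp [init₁₀]
    | 1 =>
        have h1 : PowerSeries.coeff 0 (PowerSeries.X * H₀) = 0 := by
          rw [mul_comm]; exact PowerSeries.coeff_zero_mul_X (R := ℝ) H₀
        rw [coeff_mul_one_sub_succ, coeff_CX_mul_succ, h1, hH₁₀,
          PowerSeries.coeff_mk, PowerSeries.coeff_mk]
        simp [init₁₀, init₁₀']
    | (m+2) =>
        rw [coeff_mul_one_sub_succ, coeff_CX_mul_succ]
        have h1 : PowerSeries.coeff (m+1) (PowerSeries.X * H₀) =
            PowerSeries.coeff m H₀ := by
          rw [mul_comm, PowerSeries.coeff_succ_mul_X]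
        rw [h1, hH₁₀, hH₀, PowerSeries.coeff_mk, PowerSeries.coeff_mk, PowerSeries.coeff_mk]
        have hr := rec₁₀ (m+2) (by omega)
        simp only [Nat.add_sub_cancel, Nat.cast_add, Nat.cast_ofNat] at hr
        norm_num at hr
        rw [hr, Nat.factorial_succ (m+1), Nat.factorial_succ m]
        push_cast
        field_simp
        ring
  refine ⟨A, ?_, ?_⟩
  · have : H₉ * (1 - PowerSeries.C (μ₂ ^ 2) * PowerSeries.X) ^ 2 =
        (H₉ * (1 - PowerSeries.C (μ₂ ^ 2) * PowerSeries.X)) *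
          (1 - PowerSeries.C (μ₂ ^ 2) * PowerSeries.X) := by ring
    rw [this, B]
    have h2 : (PowerSeries.C μ₂ * PowerSeries.X * H₀ +
        PowerSeries.C (μ₂ ^ 3) * PowerSeries.X * (PowerSeries.X * H₀)) *
          (1 - PowerSeries.C (μ₂ ^ 2) * PowerSeries.X) =
        (PowerSeries.C μ₂ * PowerSeries.X +
          PowerSeries.C (μ₂ ^ 3) * PowerSeries.X ^ 2) *
          (H₀ * (1 - PowerSeries.C (μ₂ ^ 2) * PowerSeries.X)) := by ring
    rw [h2, A]
    simp only [map_pow]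
    ring
  · have : H₁₀ * (1 - PowerSeries.C (μ₂ ^ 2) * PowerSeries.X) ^ 2 =
        (H₁₀ * (1 - PowerSeries.C (μ₂ ^ 2) * PowerSeries.X)) *
          (1 - PowerSeries.C (μ₂ ^ 2) * PowerSeries.X) := by ring
    rw [this, Cc]
    have h2 : PowerSeries.C (μ₂ ^ 3) * PowerSeries.X * (PowerSeries.X * H₀) *
          (1 - PowerSeries.C (μ₂ ^ 2) * PowerSeries.X) =
        PowerSeries.C (μ₂ ^ 3) * PowerSeries.X ^ 2 *
          (H₀ * (1 - PowerSeries.C (μ₂ ^ 2) * PowerSeries.X)) := by ring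
    rw [h2, A]
    simp only [map_pow]
    ring
end

section
/- Let the formal power series F(t,ω) = e^{t(m₄-3m₂²)} / ((1-m₂²t)²(1-ω-m₂²t)). Then the coefficient of tᵖωⁿ⁻ᵖ·(n-p)!/(n!·p!) expansion gives f(n,p) = p!²·C(n,p)·m₂^{2p}·∑_{j=0}^{p} (1/j!)·(m₄/m₂² - 3)ʲ·C(n-j+2, n-p+2); equivalently, ∑_{n≥0}∑_{p=0}^{n} ((n-p)!/(n!·p!))·tᵖ·ωⁿ⁻ᵖ·p!²·C(n,p)·m₂^{2p}·∑_{j=0}^{p}(1/j!)·(m₄/m₂²-3)ʲ·C(n-j+2,n-p+2) = e^{t(m₄-3m₂²)}/((1-m₂²t)²(1-ω-m₂²t)). -/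
open Nat

/-- Regrouping a summable double sum by antidiagonals. -/
private lemma dembo_hasSum_antidiag {f : ℕ × ℕ → ℝ} (hf : Summable f) :
    HasSum (fun n => ∑ kl ∈ Finset.HasAntidiagonal.antidiagonal n, f kl) (∑' p, f p) := by
  have h : HasSum (f ∘ (Finset.HasAntidiagonal.sigmaAntidiagonalEquivProd (A := ℕ))) (∑' p, f p) :=
    (Equiv.hasSum_iff _).2 hf.hasSum
  refine HasSum.sigma h fun n => ?_
  simpa [Finset.sum_attach] using
    hasSum_fintype (fun c : (Finset.HasAntidiagonal.antidiagonal n : Finset (ℕ × ℕ)) => f (c : ℕ × ℕ))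

private lemma dembo_row (r w : ℝ) (hr : |r| < 1) (q : ℕ) :
    HasSum (fun k : ℕ => (((k + q + 2).choose (q + 2) : ℕ) : ℝ) * r ^ k * w ^ q)
      ((1 / (1 - r) ^ (q + 3)) * w ^ q) := by
  have h := hasSum_choose_mul_geometric_of_norm_lt_one (𝕜 := ℝ) (q + 2) (r := r)
    (by simpa [Real.norm_eq_abs] using hr)
  have h2 := h.mul_right (w ^ q)
  simpa [add_assoc] using h2

private lemma dembo_col (r w : ℝ) (hr : |r| < 1) (hw : |w| < 1 - |r|) :
    HasSum (fun q : ℕ => (1 / (1 - r) ^ (q + 3)) * w ^ q)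
      (1 / ((1 - r) ^ 2 * (1 - w - r))) := by
  have h1r : (0:ℝ) < 1 - r := by
    have := abs_lt.1 hr; linarith
  have h1rw : (0:ℝ) < 1 - r - w := by
    have h1 := le_abs_self w
    have h2 := le_abs_self r
    have h3 := abs_lt.1 hr
    linarith
  have hq : ‖w / (1 - r)‖ < 1 := by
    rw [Real.norm_eq_abs, abs_div, abs_of_pos h1r, div_lt_one h1r]
    have := le_abs_self r; linarith
  have h := (hasSum_geometric_of_norm_lt_one hq).mul_left (1 / (1 - r) ^ 3)
  have heq : (fun q : ℕ => (1 / (1 - r) ^ (q + 3)) * w ^ q)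
      = fun q : ℕ => (1 / (1 - r) ^ 3) * (w / (1 - r)) ^ q := by
    funext q
    rw [div_pow, pow_add]
    field_simp [h1r.ne']
  have hval : (1 / (1 - r) ^ 3) * (1 - w / (1 - r))⁻¹
      = 1 / ((1 - r) ^ 2 * (1 - w - r)) := by
    have hne : (1 : ℝ) - w / (1 - r) ≠ 0 := by
      have : (1:ℝ) - w / (1 - r) = (1 - r - w) / (1 - r) := by field_simp
      rw [this]
      positivity
    have hpos : (0:ℝ) < (1 - r) ^ 2 * (1 - w - r) := by
      apply mul_pos (pow_pos h1r 2); linarith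
    rw [eq_div_iff (ne_of_gt hpos)]
    field_simp
    ring
  rw [heq, ← hval]
  exact h

private def demboB (x ω : ℝ) (kq : ℕ × ℕ) : ℝ :=
  (((kq.1 + kq.2 + 2).choose (kq.2 + 2) : ℕ) : ℝ) * x ^ kq.1 * ω ^ kq.2

private lemma demboB_norm (x ω : ℝ) (kq : ℕ × ℕ) :
    ‖demboB x ω kq‖ = demboB |x| |ω| kq := by
  simp [demboB, abs_mul, abs_pow]

private lemma demboB_summable_abs (x ω : ℝ) (hx : |x| < 1) (hwx : |ω| + |x| < 1) :
    Summable (demboB |x| |ω|) := by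
  have hx' : |(|x|)| < 1 := by rwa [abs_abs]
  have hw' : |(|ω|)| < 1 - |(|x|)| := by rw [abs_abs, abs_abs]; linarith
  have key : Summable ((demboB |x| |ω|) ∘ (Equiv.prodComm ℕ ℕ)) := by
    rw [summable_prod_of_nonneg]
    · constructor
      · intro q
        exact (dembo_row |x| |ω| hx' q).summable
      · apply Summable.congr ((dembo_col |x| |ω| hx' hw').summable)
        intro q
        exact ((dembo_row |x| |ω| hx' q).tsum_eq).symm
    · intro kq
      have : (0:ℝ) ≤ |x| := abs_nonneg x
      have : (0:ℝ) ≤ |ω| := abs_nonneg ω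
      simp only [demboB, Function.comp, Equiv.prodComm_apply]
      positivity
  exact (Equiv.prodComm ℕ ℕ).summable_iff.1 key

private lemma demboB_summable_norm (x ω : ℝ) (hx : |x| < 1) (hwx : |ω| + |x| < 1) :
    Summable (fun kq : ℕ × ℕ => ‖demboB x ω kq‖) := by
  exact (demboB_summable_abs x ω hx hwx).congr fun kq => (demboB_norm x ω kq).symm

private lemma demboB_tsum (x ω : ℝ) (hx : |x| < 1) (hwx : |ω| + |x| < 1) :
    ∑' kl : ℕ × ℕ, demboB x ω kl = 1 / ((1 - x) ^ 2 * (1 - ω - x)) := by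
  have hsum : Summable (demboB x ω) := (demboB_summable_norm x ω hx hwx).of_norm
  have hswap : Summable ((demboB x ω) ∘ (Equiv.prodComm ℕ ℕ)) :=
    (Equiv.prodComm ℕ ℕ).summable_iff.2 hsum
  have h1 : ∑' kl : ℕ × ℕ, demboB x ω kl
      = ∑' qk : ℕ × ℕ, demboB x ω (qk.2, qk.1) := by
    rw [← (Equiv.prodComm ℕ ℕ).tsum_eq (demboB x ω)]
    rfl
  have h3 : ∑' (qk : ℕ × ℕ), demboB x ω (qk.2, qk.1)
      = ∑' (q : ℕ) (k : ℕ), demboB x ω (k, q) := Summable.tsum_prod hswap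
  rw [h1, h3]
  have h2 : ∀ q : ℕ, ∑' k : ℕ, demboB x ω (k, q) = (1 / (1 - x) ^ (q + 3)) * ω ^ q := by
    intro q
    exact (dembo_row x ω hx q).tsum_eq
  calc ∑' (q : ℕ) (k : ℕ), demboB x ω (k, q)
      = ∑' q : ℕ, (1 / (1 - x) ^ (q + 3)) * ω ^ q := tsum_congr h2
    _ = 1 / ((1 - x) ^ 2 * (1 - ω - x)) :=
        (dembo_col x ω hx (by linarith)).tsum_eq

private def demboD (x ω : ℝ) (m : ℕ) : ℝ := ∑ kl ∈ Finset.HasAntidiagonal.antidiagonal m, demboB x ω kl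

private lemma demboD_summable_norm (x ω : ℝ) (hx : |x| < 1) (hwx : |ω| + |x| < 1) :
    Summable (fun m : ℕ => ‖demboD x ω m‖) := by
  have h := (dembo_hasSum_antidiag (demboB_summable_abs x ω hx hwx)).summable
  refine Summable.of_nonneg_of_le (fun m => norm_nonneg _) (fun m => ?_) h
  calc ‖demboD x ω m‖ ≤ ∑ kl ∈ Finset.HasAntidiagonal.antidiagonal m, ‖demboB x ω kl‖ :=
        norm_sum_le _ _
    _ = ∑ kl ∈ Finset.HasAntidiagonal.antidiagonal m, demboB |x| |ω| kl :=
        Finset.sum_congr rfl fun kl _ => demboB_norm x ω kl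

private lemma demboD_tsum (x ω : ℝ) (hx : |x| < 1) (hwx : |ω| + |x| < 1) :
    ∑' m : ℕ, demboD x ω m = 1 / ((1 - x) ^ 2 * (1 - ω - x)) := by
  have h := dembo_hasSum_antidiag ((demboB_summable_norm x ω hx hwx).of_norm)
  calc ∑' m : ℕ, demboD x ω m = ∑' p : ℕ × ℕ, demboB x ω p := h.tsum_eq
    _ = 1 / ((1 - x) ^ 2 * (1 - ω - x)) := demboB_tsum x ω hx hwx

private lemma dembo_exp (y : ℝ) : ∑' j : ℕ, y ^ j / (j ! : ℝ) = Real.exp y := by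
  rw [Real.exp_eq_exp_ℝ, NormedSpace.exp_eq_tsum_div]

private lemma dembo_exp_summable_norm (y : ℝ) :
    Summable fun j : ℕ => ‖y ^ j / (j ! : ℝ)‖ := by
  refine (Real.summable_pow_div_factorial |y|).congr fun j => ?_
  rw [Real.norm_eq_abs, abs_div, abs_pow, Nat.abs_cast]

private lemma dembo_swap (n : ℕ) (T : ℕ → ℕ → ℝ) :
    ∑ p ∈ Finset.range (n + 1), ∑ j ∈ Finset.range (p + 1), T p j
      = ∑ j ∈ Finset.range (n + 1), ∑ i ∈ Finset.range (n - j + 1), T (j + i) j := by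
  rw [Finset.sum_comm' (s' := fun j => Finset.Icc j n) (t' := Finset.range (n + 1))
    (fun p j => by simp only [Finset.mem_range, Finset.mem_Icc]; omega)]
  refine Finset.sum_congr rfl fun j hj => ?_
  rw [Finset.mem_range] at hj
  rw [← Finset.Ico_add_one_right_eq_Icc, Finset.sum_Ico_eq_sum_range,
    show n + 1 - j = n - j + 1 by omega]

/-- Dembo's generating function identity for the second moment of a random Gram
determinant with symmetric entries:
`∑ₙ ∑ₚ ((n-p)!/(n!p!)) tᵖ ωⁿ⁻ᵖ f(n,p) = e^{t(m₄-3m₂²)}/((1-m₂²t)²(1-ω-m₂²t))`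
where `f(n,p) = p!² C(n,p) m₂^{2p} ∑ⱼ (1/j!)(m₄/m₂²-3)ʲ C(n-j+2, n-p+2)`. -/
theorem dembo_generating_function
    (m₂ m₄ t ω : ℝ) (hm₂ : 0 < m₂)
    (ht : m₂ ^ 2 * |t| < 1) (hw : |ω| + m₂ ^ 2 * |t| < 1) :
    (∑' n : ℕ, ∑ p ∈ Finset.range (n + 1),
        (((n - p)! : ℝ) / ((n ! : ℝ) * (p ! : ℝ))) * t ^ p * ω ^ (n - p) *
          ((p ! : ℝ) ^ 2 * (n.choose p : ℝ) * m₂ ^ (2 * p) *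
            ∑ j ∈ Finset.range (p + 1),
              (1 / (j ! : ℝ)) * (m₄ / m₂ ^ 2 - 3) ^ j *
                ((n - j + 2).choose (n - p + 2) : ℝ))) =
      Real.exp (t * (m₄ - 3 * m₂ ^ 2)) /
        ((1 - m₂ ^ 2 * t) ^ 2 * (1 - ω - m₂ ^ 2 * t)) := by
  have hm₂' : m₂ ≠ 0 := ne_of_gt hm₂
  set x : ℝ := m₂ ^ 2 * t with hxdef
  set a : ℝ := m₄ / m₂ ^ 2 - 3 with hadef
  have hxabs : |x| < 1 := by
    rw [hxdef, abs_mul, abs_of_nonneg (sq_nonneg m₂)]; exact ht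
  have hwx : |ω| + |x| < 1 := by
    rw [hxdef, abs_mul, abs_of_nonneg (sq_nonneg m₂)]; exact hw
  have hax : a * x = t * (m₄ - 3 * m₂ ^ 2) := by
    rw [hxdef, hadef]; field_simp
  clear_value x a
  have hstep : ∀ n : ℕ,
      (∑ p ∈ Finset.range (n + 1),
        (((n - p)! : ℝ) / ((n ! : ℝ) * (p ! : ℝ))) * t ^ p * ω ^ (n - p) *
          ((p ! : ℝ) ^ 2 * (n.choose p : ℝ) * m₂ ^ (2 * p) *
            ∑ j ∈ Finset.range (p + 1),
              (1 / (j ! : ℝ)) * a ^ j * ((n - j + 2).choose (n - p + 2) : ℝ)))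
      = ∑ k ∈ Finset.range (n + 1), (a * x) ^ k / (k ! : ℝ) * demboD x ω (n - k) := by
    intro n
    calc (∑ p ∈ Finset.range (n + 1),
        (((n - p)! : ℝ) / ((n ! : ℝ) * (p ! : ℝ))) * t ^ p * ω ^ (n - p) *
          ((p ! : ℝ) ^ 2 * (n.choose p : ℝ) * m₂ ^ (2 * p) *
            ∑ j ∈ Finset.range (p + 1),
              (1 / (j ! : ℝ)) * a ^ j * ((n - j + 2).choose (n - p + 2) : ℝ)))
        = ∑ p ∈ Finset.range (n + 1), ∑ j ∈ Finset.range (p + 1),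
            x ^ p * ω ^ (n - p) *
              ((1 / (j ! : ℝ)) * a ^ j * ((n - j + 2).choose (n - p + 2) : ℝ)) := by
          refine Finset.sum_congr rfl fun p hp => ?_
          rw [Finset.mem_range] at hp
          have hpn : p ≤ n := by omega
          have hfact : ((n.choose p : ℝ)) * (p ! : ℝ) * ((n - p)! : ℝ) = (n ! : ℝ) := by
            exact_mod_cast Nat.choose_mul_factorial_mul_factorial hpn
          have hne : ((n ! : ℝ)) * (p ! : ℝ) ≠ 0 :=
            mul_ne_zero (Nat.cast_ne_zero.2 n.factorial_pos.ne')
              (Nat.cast_ne_zero.2 p.factorial_pos.ne')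
          have hc : ((n - p)! : ℝ) / ((n ! : ℝ) * (p ! : ℝ)) *
              ((p ! : ℝ) ^ 2 * (n.choose p : ℝ)) = 1 := by
            rw [div_mul_eq_mul_div, div_eq_one_iff_eq hne]
            linear_combination ((p ! : ℝ)) * hfact
          have hxp : m₂ ^ (2 * p) * t ^ p = x ^ p := by
            rw [hxdef, pow_mul, ← mul_pow]
          calc (((n - p)! : ℝ) / ((n ! : ℝ) * (p ! : ℝ))) * t ^ p * ω ^ (n - p) *
              ((p ! : ℝ) ^ 2 * (n.choose p : ℝ) * m₂ ^ (2 * p) *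
                ∑ j ∈ Finset.range (p + 1),
                  (1 / (j ! : ℝ)) * a ^ j * ((n - j + 2).choose (n - p + 2) : ℝ))
              = (((n - p)! : ℝ) / ((n ! : ℝ) * (p ! : ℝ)) *
                  ((p ! : ℝ) ^ 2 * (n.choose p : ℝ))) * (m₂ ^ (2 * p) * t ^ p) *
                  (ω ^ (n - p) * ∑ j ∈ Finset.range (p + 1),
                    (1 / (j ! : ℝ)) * a ^ j * ((n - j + 2).choose (n - p + 2) : ℝ)) := by
                ring
            _ = x ^ p * (ω ^ (n - p) * ∑ j ∈ Finset.range (p + 1),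
                  (1 / (j ! : ℝ)) * a ^ j * ((n - j + 2).choose (n - p + 2) : ℝ)) := by
                rw [hc, hxp, one_mul]
            _ = ∑ j ∈ Finset.range (p + 1),
                  x ^ p * ω ^ (n - p) *
                    ((1 / (j ! : ℝ)) * a ^ j * ((n - j + 2).choose (n - p + 2) : ℝ)) := by
                rw [Finset.mul_sum, Finset.mul_sum]
                exact Finset.sum_congr rfl fun j _ => by ring
      _ = ∑ j ∈ Finset.range (n + 1), ∑ i ∈ Finset.range (n - j + 1),
            x ^ (j + i) * ω ^ (n - (j + i)) *
              ((1 / (j ! : ℝ)) * a ^ j * ((n - j + 2).choose (n - (j + i) + 2) : ℝ)) :=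
          dembo_swap n (fun p j => x ^ p * ω ^ (n - p) *
            ((1 / (j ! : ℝ)) * a ^ j * ((n - j + 2).choose (n - p + 2) : ℝ)))
      _ = ∑ k ∈ Finset.range (n + 1), (a * x) ^ k / (k ! : ℝ) * demboD x ω (n - k) := by
          refine Finset.sum_congr rfl fun k hk => ?_
          rw [Finset.mem_range] at hk
          have hkn : k ≤ n := by omega
          rw [demboD, Finset.Nat.sum_antidiagonal_eq_sum_range_succ_mk, Finset.mul_sum]
          refine Finset.sum_congr rfl fun i hi => ?_
          rw [Finset.mem_range] at hi
          have hik : i ≤ n - k := by omega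
          simp only [demboB]
          have e1 : n - k - i = n - (k + i) := by omega
          have e2 : i + (n - (k + i)) + 2 = n - k + 2 := by omega
          rw [e1, e2, mul_pow, pow_add]
          ring
  calc (∑' n : ℕ, ∑ p ∈ Finset.range (n + 1),
        (((n - p)! : ℝ) / ((n ! : ℝ) * (p ! : ℝ))) * t ^ p * ω ^ (n - p) *
          ((p ! : ℝ) ^ 2 * (n.choose p : ℝ) * m₂ ^ (2 * p) *
            ∑ j ∈ Finset.range (p + 1),
              (1 / (j ! : ℝ)) * a ^ j * ((n - j + 2).choose (n - p + 2) : ℝ)))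
      = ∑' n : ℕ, ∑ k ∈ Finset.range (n + 1),
          (a * x) ^ k / (k ! : ℝ) * demboD x ω (n - k) := tsum_congr hstep
    _ = (∑' j : ℕ, (a * x) ^ j / (j ! : ℝ)) * ∑' m : ℕ, demboD x ω m :=
        (tsum_mul_tsum_eq_tsum_sum_range_of_summable_norm
          (dembo_exp_summable_norm (a * x)) (demboD_summable_norm x ω hxabs hwx)).symm
    _ = Real.exp (t * (m₄ - 3 * m₂ ^ 2)) / ((1 - x) ^ 2 * (1 - ω - x)) := by
        rw [dembo_exp (a * x), demboD_tsum x ω hxabs hwx, hax, mul_one_div]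
end
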